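/- arXiv:1301.5780 — 4 statements merged into one kernel-verified Lean document; each statement's English description precedes it below -/
import Mathlib

section
/- Let {G, Γ0, Γ1} be a quasi boundary triple for A* with γ-field γ and Weyl function M. Then for all λ ∈ ρ(A0) and k ∈ ℕ, the closure of the k-th derivative of M satisfies cl(d^k/dλ^k M(λ)) = k! γ(λ̄)* (A0 − λ)^{-(k−1)} cl(γ(λ)). -/
variable {H G : Type*}
  [NormedAddCommGroup H] [InnerProductSpace ℂ H] [CompleteSpace H]
  [NormedAddCommGroup G] [InnerProductSpace ℂ G] [CompleteSpace G]

/-- The restriction of the partially defined operator `T` to the kernel of a boundary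
map `Γ` (e.g. `A0 = T ↾ ker Γ0`). -/
noncomputable def kerRestrict (T : H →ₗ.[ℂ] H) {G' : Type*} [AddCommGroup G'] [Module ℂ G']
    (Γ : T.domain →ₗ[ℂ] G') : H →ₗ.[ℂ] H :=
  T.domRestrict (Submodule.map T.domain.subtype (LinearMap.ker Γ))

/-- `{G, Γ0, Γ1}` is a quasi boundary triple for `A* = T̄` : the domain of `T` is dense,
the joint boundary map `(Γ0, Γ1)` has dense range in `G × G`, `A0 := T ↾ ker Γ0` is
self-adjoint, the abstract Green identity holds, and the closure of `T` is the adjoint of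
the underlying closed densely defined symmetric operator `A = T ↾ (ker Γ0 ∩ ker Γ1)`. -/
def IsQuasiBoundaryTriple (T : H →ₗ.[ℂ] H) (Γ0 Γ1 : T.domain →ₗ[ℂ] G) : Prop :=
  Dense (T.domain : Set H) ∧
  Dense (Set.range fun f : T.domain => ((Γ0 f, Γ1 f) : G × G)) ∧
  IsSelfAdjoint (kerRestrict T Γ0) ∧
  (∀ f g : T.domain,
    (inner ℂ (T f) ((g : H)) : ℂ) - inner ℂ ((f : H)) (T g)
      = (inner ℂ (Γ1 f) (Γ0 g) : ℂ) - inner ℂ (Γ0 f) (Γ1 g)) ∧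
  T.closure = (kerRestrict T (Γ0.prod Γ1)).adjoint

/-- `R` is the resolvent of the (possibly unbounded) operator `A` at the spectral
parameter `z`. -/
def IsResolventAt (A : H →ₗ.[ℂ] H) (z : ℂ) (R : H →L[ℂ] H) : Prop :=
  (∀ x : H, ∃ hx : R x ∈ A.domain, A ⟨R x, hx⟩ - z • R x = x) ∧
  ∀ f : A.domain, R (A f - z • (f : H)) = (f : H)

/-- Derivatives of the Weyl function of a quasi boundary triple: for `λ ∈ ρ(A0)` and
`k ≥ 1`, the closure of `dᵏ/dλᵏ M(λ)` is the bounded operator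
`k! γ(λ̄)* (A0 − λ)^{-(k-1)} (cl γ(λ))`; equivalently, on the dense domain `ran Γ0` of
`M(λ)` (where `γ(λ)(Γ0 f) = f` for `f ∈ ker(T − λ)`):
`dᵏ/dλᵏ (M(λ)(Γ0 f)) = k! γ(λ̄)* ((A0 − λ)^{-(k-1)} f)`. -/
theorem iteratedDeriv_weylFunction
    (T : H →ₗ.[ℂ] H) (Γ0 Γ1 : T.domain →ₗ[ℂ] G)
    (hQBT : IsQuasiBoundaryTriple T Γ0 Γ1)
    {U : Set ℂ} (hU : IsOpen U)
    (R : ℂ → (H →L[ℂ] H)) (hR : ∀ z ∈ U, IsResolventAt (kerRestrict T Γ0) z (R z))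
    (γstar : ℂ → (H →L[ℂ] G))
    (hγstar : ∀ z ∈ U, ∀ x : H, ∃ hx : R z x ∈ T.domain, γstar z x = Γ1 ⟨R z x, hx⟩)
    (Mfun : ℂ → G → G)
    (hM : ∀ z ∈ U, ∀ f : T.domain, T f = z • (f : H) → Mfun z (Γ0 f) = Γ1 f)
    (k : ℕ) (hk : 1 ≤ k) {lam : ℂ} (hlam : lam ∈ U) :
    ∀ f : T.domain, T f = lam • (f : H) →
      iteratedDeriv k (fun z => Mfun z (Γ0 f)) lam =
        (k.factorial : ℂ) • γstar lam (((R lam) ^ (k - 1)) (f : H)) := by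

  intro f hf
  set Rl := R lam with hRldef
  -- Basic properties of the resolvent values, extracted from `hR` and `hγstar`.
  have key : ∀ z ∈ U, ∀ x : H, ∃ hx : R z x ∈ T.domain,
      T ⟨R z x, hx⟩ = z • R z x + x ∧ Γ0 ⟨R z x, hx⟩ = 0 ∧ Γ1 ⟨R z x, hx⟩ = γstar z x := by
    intro z hz x
    obtain ⟨hx1, heq⟩ := (hR z hz).1 x
    have hmem : R z x ∈ Submodule.map T.domain.subtype (LinearMap.ker Γ0) ⊓ T.domain := hx1
    have hxT : R z x ∈ T.domain := hmem.2
    refine ⟨hxT, ?_, ?_, ?_⟩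
    · have hv : kerRestrict T Γ0 ⟨R z x, hx1⟩ = T ⟨R z x, hxT⟩ :=
        LinearPMap.domRestrict_apply rfl
      rw [hv] at heq
      have := sub_eq_iff_eq_add.mp heq
      rw [this]; abel
    · obtain ⟨w, hw, hwe⟩ := hmem.1
      have hww : (⟨R z x, hxT⟩ : T.domain) = w := Subtype.ext hwe.symm
      rw [hww]; exact hw
    · obtain ⟨hx2, h2⟩ := hγstar z hz x
      exact h2.symm
  -- The resolvent identity.
  have res_id : ∀ z ∈ U, ∀ x : H, R z x = Rl x + (z - lam) • R z (Rl x) := by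
    intro z hz x
    obtain ⟨hx1, _⟩ := (hR lam hlam).1 x
    obtain ⟨hxT, hT, _, _⟩ := key lam hlam x
    have h2 := (hR z hz).2 ⟨Rl x, hx1⟩
    have hv : kerRestrict T Γ0 ⟨Rl x, hx1⟩ = T ⟨Rl x, hxT⟩ :=
      LinearPMap.domRestrict_apply rfl
    rw [hv, hT] at h2
    have hcoe : ((⟨Rl x, hx1⟩ : (kerRestrict T Γ0).domain) : H) = Rl x := rfl
    rw [hcoe] at h2
    have harg : (lam • Rl x + x - z • Rl x : H) = x + (lam - z) • Rl x := by module
    rw [harg, map_add, map_smul] at h2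
    have h3 : R z x = Rl x - (lam - z) • R z (Rl x) := eq_sub_of_add_eq h2
    rw [h3]; module
  -- The key formula for the Weyl function on eigenvectors.
  have hg : ∀ z ∈ U, Mfun z (Γ0 f) = Γ1 f + (z - lam) • γstar z (f : H) := by
    intro z hz
    obtain ⟨hxT, hT, h0, h1⟩ := key z hz (f : H)
    set fz : T.domain := f + (z - lam) • (⟨R z (f : H), hxT⟩ : T.domain) with hfz
    have hcoe : ((fz : T.domain) : H) = (f : H) + (z - lam) • R z (f : H) := rfl
    have hTfz : T fz = z • (fz : H) := by
      rw [hfz, LinearPMap.map_add, LinearPMap.map_smul, hT, hf]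
      push_cast
      module
    have h0fz : Γ0 fz = Γ0 f := by
      rw [hfz, map_add, map_smul, h0, smul_zero, add_zero]
    have hMz := hM z hz fz hTfz
    rw [h0fz] at hMz
    rw [hMz, hfz, map_add, map_smul, h1]
  -- Choice of a radius.
  obtain ⟨ε, hε, hballU⟩ := Metric.isOpen_iff.mp hU lam hlam
  set Mn : ℝ := ‖Rl‖ + 1 with hMndef
  have hMn1 : 1 ≤ Mn := le_add_of_nonneg_left (norm_nonneg _)
  have hMn0 : 0 < Mn := lt_of_lt_of_le one_pos hMn1
  have hRlMn : ‖Rl‖ < Mn := lt_add_one _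
  set r0 : ℝ := min ε (1 / Mn) with hr0def
  have hr0pos : 0 < r0 := lt_min hε (by positivity)
  have hr0Mn : r0 ≤ 1 / Mn := min_le_right _ _
  -- The coefficients and the power series.
  set c : ℕ → G := fun n => Nat.casesOn n (Γ1 f) (fun m => γstar lam ((Rl ^ m) (f : H)))
    with hcdef
  set p : FormalMultilinearSeries ℂ ℂ G :=
    fun n => ContinuousMultilinearMap.mkPiRing ℂ (Fin n) (c n) with hpdef
  have hpnorm : ∀ n, ‖p n‖ = ‖c n‖ := fun n => ContinuousMultilinearMap.norm_mkPiRing (c n)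
  have hpow : ∀ (n : ℕ) (x : H), ‖(Rl ^ n) x‖ ≤ ‖Rl‖ ^ n * ‖x‖ := by
    intro n
    induction n with
    | zero => intro x; simp
    | succ m ih =>
      intro x
      rw [pow_succ, ContinuousLinearMap.mul_apply]
      calc ‖(Rl ^ m) (Rl x)‖ ≤ ‖Rl‖ ^ m * ‖Rl x‖ := ih (Rl x)
        _ ≤ ‖Rl‖ ^ m * (‖Rl‖ * ‖x‖) :=
            mul_le_mul_of_nonneg_left (Rl.le_opNorm x) (by positivity)
        _ = ‖Rl‖ ^ (m + 1) * ‖x‖ := by ring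
  set C : ℝ := max ‖Γ1 f‖ (‖γstar lam‖ * ‖(f : H)‖) with hCdef
  have hC0 : 0 ≤ C := le_trans (norm_nonneg _) (le_max_left _ _)
  have hcb : ∀ n, ‖c n‖ ≤ C * Mn ^ n := by
    intro n
    rw [hcdef, hCdef]
    cases n with
    | zero => simpa using le_max_left ‖Γ1 f‖ (‖γstar lam‖ * ‖(f : H)‖)
    | succ m =>
      have hMpow : (0:ℝ) ≤ Mn ^ m := by positivity
      have e1 : ‖(γstar lam) ((Rl ^ m) (f : H))‖ ≤ ‖γstar lam‖ * (‖Rl‖ ^ m * ‖(f : H)‖) :=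
        le_trans ((γstar lam).le_opNorm _)
          (mul_le_mul_of_nonneg_left (hpow m _) (norm_nonneg _))
      have e2 : ‖Rl‖ ^ m ≤ Mn ^ m := pow_le_pow_left₀ (norm_nonneg _) hRlMn.le m
      have e3 : ‖γstar lam‖ * ‖(f : H)‖ ≤ max ‖Γ1 f‖ (‖γstar lam‖ * ‖(f : H)‖) :=
        le_max_right _ _
      have e4 : (0:ℝ) ≤ ‖γstar lam‖ * ‖(f : H)‖ := by positivity
      have e5 : (0:ℝ) ≤ max ‖Γ1 f‖ (‖γstar lam‖ * ‖(f : H)‖) :=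
        le_trans (norm_nonneg _) (le_max_left _ _)
      show ‖(γstar lam) ((Rl ^ m) (f : H))‖ ≤ _
      calc ‖(γstar lam) ((Rl ^ m) (f : H))‖
          ≤ ‖γstar lam‖ * (‖Rl‖ ^ m * ‖(f : H)‖) := e1
        _ = (‖γstar lam‖ * ‖(f : H)‖) * ‖Rl‖ ^ m := by ring
        _ ≤ (‖γstar lam‖ * ‖(f : H)‖) * Mn ^ m := mul_le_mul_of_nonneg_left e2 e4
        _ ≤ (max ‖Γ1 f‖ (‖γstar lam‖ * ‖(f : H)‖)) * Mn ^ m :=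
            mul_le_mul_of_nonneg_right e3 hMpow
        _ ≤ (max ‖Γ1 f‖ (‖γstar lam‖ * ‖(f : H)‖)) * Mn ^ (m + 1) :=
            mul_le_mul_of_nonneg_left (pow_le_pow_right₀ hMn1 (Nat.le_succ m)) e5
  -- Radius bound.
  have hrad : ENNReal.ofReal r0 ≤ p.radius := by
    have hnn : (0 : ℝ) ≤ 1 / Mn := by positivity
    have hb : ∀ n : ℕ, ‖p n‖ * ((1 / Mn).toNNReal : ℝ) ^ n ≤ C := by
      intro n
      rw [hpnorm, Real.coe_toNNReal _ hnn]
      calc ‖c n‖ * (1 / Mn) ^ n ≤ (C * Mn ^ n) * (1 / Mn) ^ n := by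
            gcongr; exact hcb n
        _ = C * (Mn * (1 / Mn)) ^ n := by rw [mul_pow]; ring
        _ = C := by rw [mul_one_div, div_self hMn0.ne', one_pow, mul_one]
    have h1 := p.le_radius_of_bound C hb
    refine le_trans ?_ h1
    rw [← ENNReal.ofReal_coe_nnreal, Real.coe_toNNReal _ hnn]
    exact ENNReal.ofReal_le_ofReal hr0Mn
  -- The power-series expansion.
  have hfp : HasFPowerSeriesOnBall (fun z => Mfun z (Γ0 f)) p lam (ENNReal.ofReal r0) := by
    refine ⟨hrad, ENNReal.ofReal_pos.mpr hr0pos, ?_⟩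
    intro y hy
    have hyn : ‖y‖ < r0 := by
      rw [EMetric.mem_ball, edist_zero_right, ← ofReal_norm] at hy
      exact (ENNReal.ofReal_lt_ofReal_iff hr0pos).mp hy
    have hzU : lam + y ∈ U := by
      apply hballU
      rw [Metric.mem_ball, dist_eq_norm]
      simpa using hyn.trans_le (min_le_left _ _)
    have hsmall : ‖y • Rl‖ < 1 := by
      rw [norm_smul]
      calc ‖y‖ * ‖Rl‖ ≤ ‖y‖ * Mn := mul_le_mul_of_nonneg_left hRlMn.le (norm_nonneg _)
        _ < (1 / Mn) * Mn := by
            apply mul_lt_mul_of_pos_right _ hMn0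
            exact hyn.trans_le hr0Mn
        _ = 1 := by field_simp
    set v : H →L[ℂ] H := ∑' n : ℕ, (y • Rl) ^ n with hvdef
    have hv1 : (1 - y • Rl) * v = 1 := mul_neg_geom_series _ hsmall
    have hvs : HasSum (fun n : ℕ => (y • Rl) ^ n) v :=
      (summable_geometric_of_norm_lt_one hsmall).hasSum
    -- R (lam+y) f = Rl (v f)
    have hkey : R (lam + y) ((f : H)) = Rl (v (f : H)) := by
      have h1 := res_id (lam + y) hzU (v (f : H))
      have h2 : R (lam + y) (v (f : H)) - y • R (lam + y) (Rl (v (f : H)))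
          = Rl (v (f : H)) := by
        rw [h1]; module
      have h3 : R (lam + y) (v (f : H) - y • Rl (v (f : H))) = Rl (v (f : H)) := by
        rw [map_sub, map_smul]; exact h2
      have h4 : (v (f : H) : H) - y • Rl (v (f : H)) = ((1 - y • Rl) * v) (f : H) := by
        simp [ContinuousLinearMap.mul_apply, sub_smul]
      rw [h4, hv1] at h3
      simpa using h3
    -- γstar (lam+y) f = γstar lam (v f)
    have hγeq : γstar (lam + y) ((f : H)) = γstar lam (v (f : H)) := by
      obtain ⟨hxz, _, _, h1z⟩ := key (lam + y) hzU (f : H)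
      obtain ⟨hxl, _, _, h1l⟩ := key lam hlam (v (f : H))
      rw [← h1z, ← h1l]
      congr 1
      exact Subtype.ext hkey
    -- the vector-valued geometric sums
    have hs1 : HasSum (fun n : ℕ => ((y • Rl) ^ n) (f : H)) (v (f : H)) := by
      have := hvs.mapL (ContinuousLinearMap.apply ℂ H (f : H))
      simpa using this
    have hs2 : HasSum (fun n : ℕ => y ^ n • (Rl ^ n) (f : H)) (v (f : H)) := by
      convert hs1 using 2 with n
      rw [smul_pow, ContinuousLinearMap.smul_apply]
    have hs3 : HasSum (fun n : ℕ => y ^ (n + 1) • γstar lam ((Rl ^ n) (f : H)))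
        (y • γstar lam (v (f : H))) := by
      have := (hs2.mapL (γstar lam)).const_smul y
      convert this using 2 with n
      rw [map_smul, smul_smul, pow_succ]
      ring_nf
    -- assemble
    have happ : ∀ n : ℕ, (p n fun _ : Fin n => y) = y ^ n • c n := by
      intro n
      rw [hpdef]
      rw [ContinuousMultilinearMap.mkPiRing_apply]
      congr 1
      simp
    have hF : HasSum (fun n : ℕ => p n fun _ : Fin n => y)
        (y • γstar lam (v (f : H)) + ∑ i ∈ Finset.range 1, (p i fun _ : Fin i => y)) := by
      apply (hasSum_nat_add_iff 1).mp
      convert hs3 using 2 with n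
      rw [happ]
    have hsum0 : (∑ i ∈ Finset.range 1, (p i fun _ : Fin i => y)) = Γ1 f := by
      rw [Finset.sum_range_one, happ]
      simp [hcdef]
    rw [hsum0] at hF
    have hgz := hg (lam + y) hzU
    rw [add_sub_cancel_left] at hgz
    rw [hgz, hγeq, add_comm]
    exact hF
  -- Conclusion via the factorial formula for power-series coefficients.
  have h1 := hfp.factorial_smul (1 : ℂ) k
  rw [iteratedDeriv_eq_iteratedFDeriv, ← h1]
  obtain ⟨m, rfl⟩ : ∃ m, k = m + 1 := ⟨k - 1, (Nat.succ_pred_eq_of_pos hk).symm⟩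
  rw [← Nat.cast_smul_eq_nsmul ℂ]
  congr 1
  rw [hpdef, ContinuousMultilinearMap.mkPiRing_apply]
  simp [hcdef]
end

section
/- Let {G, Γ0, Γ1} be a quasi boundary triple for A* with γ-field γ and Weyl function M, and suppose A1 = T↾ker Γ1 is self-adjoint. Then for all λ ∈ ρ(A0) ∩ ρ(A1), the Krein-type resolvent formula (A0 − λ)^{-1} − (A1 − λ)^{-1} = γ(λ) M(λ)^{-1} γ(λ̄)* holds, where M(λ)^{-1}γ(λ̄)* is bounded. -/
variable {H G : Type*}
  [NormedAddCommGroup H] [InnerProductSpace ℂ H] [CompleteSpace H]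
  [NormedAddCommGroup G] [InnerProductSpace ℂ G] [CompleteSpace G]

/-- Krein-type formula: if `A1 = T ↾ ker Γ1` is self-adjoint, then for
`λ ∈ ρ(A0) ∩ ρ(A1)` one has `(A0 − λ)⁻¹ − (A1 − λ)⁻¹ = γ(λ) M(λ)⁻¹ γ(λ̄)*`, where
`M(λ)⁻¹ γ(λ̄)*` is bounded.  Concretely: there is a bounded operator `S : H → G` such that
for every `x` there is `f = γ(λ)(S x) ∈ ker(T − λ)` with `Γ0 f = S x`,
`M(λ)(S x) = Γ1 f = γ(λ̄)* x = Γ1 ((A0 − λ)⁻¹ x)` and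
`(A0 − λ)⁻¹ x − (A1 − λ)⁻¹ x = f`. -/
theorem krein_formula_dirichlet_neumann
    (T : H →ₗ.[ℂ] H) (Γ0 Γ1 : T.domain →ₗ[ℂ] G)
    (hQBT : IsQuasiBoundaryTriple T Γ0 Γ1)
    (hA1 : IsSelfAdjoint (kerRestrict T Γ1))
    {lam : ℂ} (R0 R1 : H →L[ℂ] H)
    (hR0 : IsResolventAt (kerRestrict T Γ0) lam R0)
    (hR1 : IsResolventAt (kerRestrict T Γ1) lam R1) :
    ∃ S : H →L[ℂ] G, ∀ x : H, ∃ f : T.domain,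
      T f = lam • (f : H) ∧
      Γ0 f = S x ∧
      (∃ hx : R0 x ∈ T.domain, Γ1 ⟨R0 x, hx⟩ = Γ1 f) ∧
      R0 x - R1 x = (f : H) := by
  obtain ⟨hdom, hdense, hA0, hGreen, hclos⟩ := hQBT
  -- membership of resolvent values in the domain of T
  have memT1 : ∀ x : H, R1 x ∈ T.domain := fun x =>
    (Submodule.mem_inf.mp (hR1.1 x).choose).2
  have memT0 : ∀ x : H, R0 x ∈ T.domain := fun x =>
    (Submodule.mem_inf.mp (hR0.1 x).choose).2
  -- the linear map `j : x ↦ (A1 - λ)⁻¹ x` viewed as valued in `T.domain`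
  set j : H →ₗ[ℂ] T.domain :=
    { toFun := fun x => ⟨R1 x, memT1 x⟩
      map_add' := fun a b => Subtype.ext (by simp)
      map_smul' := fun c a => Subtype.ext (by simp) } with hj
  have hjval : ∀ x : H, ((j x : H)) = R1 x := fun x => rfl
  -- `Γ1 (j x) = 0`
  have hΓ1j : ∀ x : H, Γ1 (j x) = 0 := by
    intro x
    obtain ⟨p, hp, hpv⟩ := (Submodule.mem_inf.mp (hR1.1 x).choose).1
    have hjp : j x = p := Subtype.ext (by simp [hjval, ← hpv])
    rw [hjp]
    exact hp
  -- `T (j x) = x + λ • R1 x`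
  have hTj : ∀ x : H, T (j x) = x + lam • R1 x := by
    intro x
    obtain ⟨hx, hval⟩ := hR1.1 x
    have he : (kerRestrict T Γ1) ⟨R1 x, hx⟩ = T (j x) :=
      LinearPMap.domRestrict_apply (rfl : (R1 x : H) = ((j x : H)))
    rw [he] at hval
    exact eq_add_of_sub_eq hval
  -- `Γ0 (i x) = 0` and `T (i x) = x + λ • R0 x` for `i x := ⟨R0 x, _⟩`
  have hΓ0i : ∀ x : H, Γ0 (⟨R0 x, memT0 x⟩ : T.domain) = 0 := by
    intro x
    obtain ⟨p, hp, hpv⟩ := (Submodule.mem_inf.mp (hR0.1 x).choose).1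
    have hip : (⟨R0 x, memT0 x⟩ : T.domain) = p := Subtype.ext (by simp [← hpv])
    rw [hip]
    exact hp
  have hTi : ∀ x : H, T (⟨R0 x, memT0 x⟩ : T.domain) = x + lam • R0 x := by
    intro x
    obtain ⟨hx, hval⟩ := hR0.1 x
    have he : (kerRestrict T Γ0) ⟨R0 x, hx⟩ = T (⟨R0 x, memT0 x⟩ : T.domain) :=
      LinearPMap.domRestrict_apply (rfl : (R0 x : H) = R0 x)
    rw [he] at hval
    exact eq_add_of_sub_eq hval
  -- the range of `Γ1` is dense in `G`
  have hd1 : DenseRange (fun f : T.domain => Γ1 f) := by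
    have h2 : DenseRange (fun f : T.domain => ((Γ0 f, Γ1 f) : G × G)) := hdense
    have hs : DenseRange (Prod.snd : G × G → G) :=
      Function.Surjective.denseRange Prod.snd_surjective
    exact hs.comp h2 continuous_snd
  -- the key linear map `L := Γ0 ∘ j`
  set L : H →ₗ[ℂ] G := Γ0.comp j with hL
  -- the boundedness of `L` via the closed graph theorem and Green's identity
  have hgreen : ∀ (z : H) (g : T.domain),
      (inner ℂ (Γ0 (j z)) (Γ1 g) : ℂ)
        = inner ℂ ((R1 z : H)) (T g) - inner ℂ (z + lam • R1 z) ((g : H)) := by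
    intro z g
    have h1 := hGreen (j z) g
    rw [hΓ1j z, hTj z] at h1
    rw [hjval] at h1
    simp only [inner_zero_left] at h1
    linear_combination h1
  have hcont : Continuous L := by
    apply LinearMap.continuous_of_seq_closed_graph
    intro u x y hu hy
    have hR1u : Filter.Tendsto (fun n => R1 (u n)) Filter.atTop (nhds (R1 x)) :=
      (R1.continuous.tendsto x).comp hu
    have hcg : ∀ g : T.domain, (inner ℂ (y - L x) (Γ1 g) : ℂ) = 0 := by
      intro g
      have t1 : Filter.Tendsto (fun n => (inner ℂ (L (u n)) (Γ1 g) : ℂ)) Filter.atTop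
          (nhds (inner ℂ (L x) (Γ1 g))) := by
        have : ∀ z : H, (inner ℂ (L z) (Γ1 g) : ℂ)
            = inner ℂ ((R1 z : H)) (T g) - inner ℂ (z + lam • R1 z) ((g : H)) := fun z =>
          hgreen z g
        simp only [this]
        exact (hR1u.inner tendsto_const_nhds).sub
          ((hu.add (hR1u.const_smul lam)).inner tendsto_const_nhds)
      have t2 : Filter.Tendsto (fun n => (inner ℂ (L (u n)) (Γ1 g) : ℂ)) Filter.atTop
          (nhds (inner ℂ y (Γ1 g))) :=
        Filter.Tendsto.inner hy tendsto_const_nhds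
      have := tendsto_nhds_unique t2 t1
      rw [inner_sub_left, this, sub_self]
    have hc0 : y - L x = 0 := by
      have hcl : IsClosed {v : G | (inner ℂ (y - L x) v : ℂ) = 0} :=
        isClosed_eq (continuous_const.inner continuous_id) continuous_const
      have hsub : Set.range (fun f : T.domain => Γ1 f) ⊆
          {v : G | (inner ℂ (y - L x) v : ℂ) = 0} := by
        rintro v ⟨g, rfl⟩
        exact hcg g
      have hall : (Set.univ : Set G) ⊆ {v : G | (inner ℂ (y - L x) v : ℂ) = 0} := by
        rw [← hd1.closure_eq]
        exact closure_minimal hsub hcl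
      exact inner_self_eq_zero.mp (hall (Set.mem_univ _))
    exact sub_eq_zero.mp hc0
  -- the bounded operator `S := -Γ0 ∘ (A1 - λ)⁻¹`
  refine ⟨-(⟨L, hcont⟩ : H →L[ℂ] G), fun x => ?_⟩
  refine ⟨(⟨R0 x, memT0 x⟩ : T.domain) - j x, ?_, ?_, ⟨memT0 x, ?_⟩, ?_⟩
  · rw [T.map_sub, hTi x, hTj x]
    have : ((((⟨R0 x, memT0 x⟩ : T.domain) - j x : T.domain)) : H) = R0 x - R1 x := rfl
    rw [this, smul_sub]
    abel
  · rw [map_sub, hΓ0i x]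
    show (0 : G) - Γ0 (j x) = -(L x)
    rw [hL]
    simp
  · rw [map_sub, hΓ1j x, sub_zero]
  · rfl
end

section
/- Let {G, Γ0, Γ1} be a quasi boundary triple for A* with ran Γ0 = G, A1 = T↾ker Γ1 self-adjoint, and M(λ0) compact for some λ0 ∈ ρ(A0). If B is a bounded self-adjoint operator on G, then the extension A_[B] := T↾ker(BΓ1 − Γ0) is self-adjoint in H, and for λ ∈ ρ(A_[B]) ∩ ρ(A0) one has (A_[B] − λ)^{-1} − (A0 − λ)^{-1} = γ(λ)(I − BM(λ))^{-1} B γ(λ̄)* = γ(λ) B (I − M(λ)B)^{-1} γ(λ̄)*, with (I − BM(λ))^{-1} and (I − M(λ)B)^{-1} bounded on G. -/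
variable {H G : Type*}
  [NormedAddCommGroup H] [InnerProductSpace ℂ H] [CompleteSpace H]
  [NormedAddCommGroup G] [InnerProductSpace ℂ G] [CompleteSpace G]

set_option linter.unusedSectionVars false
set_option maxHeartbeats 2000000

open Filter Topology

section KreinHelpers


lemma compactOp_subseq {K : G →L[ℂ] G} (hK : IsCompactOperator K)
    (u : ℕ → G) (hu : ∀ n, ‖u n‖ ≤ 1) :
    ∃ (φ : ℕ → ℕ) (y : G), StrictMono φ ∧
      Tendsto (fun n => K (u (φ n))) atTop (𝓝 y) := by
  obtain ⟨C, hC, hKC⟩ := hK.image_closedBall_subset_compact 1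
  have hmem : ∀ n, K (u n) ∈ C := fun n =>
    hKC ⟨u n, by simpa [Metric.mem_closedBall, dist_eq_norm] using hu n, rfl⟩
  obtain ⟨y, _, φ, hφ, hconv⟩ := hC.tendsto_subseq hmem
  exact ⟨φ, y, hφ, hconv⟩

lemma findim_of_bound (N : Submodule ℂ G) (hNc : IsClosed (N : Set G)) (K : G →L[ℂ] G)
    (hK : IsCompactOperator K) (C : ℝ) (hb : ∀ u ∈ N, ‖u‖ ≤ C * ‖K u‖) :
    FiniteDimensional ℂ N := by
  have hb' : ∀ u ∈ N, ‖u‖ ≤ (max C 1) * ‖K u‖ := fun u hu =>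
    (hb u hu).trans (by
      have := norm_nonneg (K u)
      nlinarith [le_max_left C 1])
  set C' := max C 1 with hC'
  have hC'0 : 0 < C' := lt_of_lt_of_le zero_lt_one (le_max_right C 1)
  set S : Set G := (N : Set G) ∩ Metric.closedBall 0 1 with hS
  have hSc : IsClosed S := hNc.inter Metric.isClosed_closedBall
  have hseq : IsSeqCompact S := by
    intro u hu
    have h1 : ∀ n, ‖u n‖ ≤ 1 := fun n => by
      have := (hu n).2; simpa [Metric.mem_closedBall, dist_eq_norm] using this
    obtain ⟨φ, y, hφ, hconv⟩ := compactOp_subseq hK u h1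
    have hcauchyK : CauchySeq (fun n => K (u (φ n))) := hconv.cauchySeq
    have hcauchy : CauchySeq (u ∘ φ) := by
      rw [Metric.cauchySeq_iff] at hcauchyK ⊢
      intro ε hε
      obtain ⟨M, hM⟩ := hcauchyK (ε / C') (by positivity)
      refine ⟨M, fun m hm n hn => ?_⟩
      have hmem : u (φ m) - u (φ n) ∈ N := sub_mem (hu (φ m)).1 (hu (φ n)).1
      have := hb' _ hmem
      rw [map_sub] at this
      calc dist ((u ∘ φ) m) ((u ∘ φ) n) = ‖u (φ m) - u (φ n)‖ := by
            simp [Function.comp, dist_eq_norm]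
        _ ≤ C' * ‖K (u (φ m)) - K (u (φ n))‖ := this
        _ < C' * (ε / C') := by
            have h2 := hM m hm n hn
            rw [dist_eq_norm] at h2
            exact (mul_lt_mul_iff_right₀ hC'0).mpr h2
        _ = ε := by field_simp
    obtain ⟨x, hx⟩ := cauchySeq_tendsto_of_complete hcauchy
    refine ⟨x, hSc.mem_of_tendsto hx (Eventually.of_forall fun n => hu (φ n)), φ, hφ, hx⟩
  have hcomp : IsCompact S := hseq.isCompact
  have hball : IsCompact (Metric.closedBall (0 : N) 1) := by
    rw [Topology.IsEmbedding.isCompact_iff (IsEmbedding.subtypeVal)]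
    have himg : Subtype.val '' Metric.closedBall (0 : N) 1 = S := by
      ext x
      constructor
      · rintro ⟨⟨x, hxN⟩, hball, rfl⟩
        refine ⟨hxN, ?_⟩
        simpa [Metric.mem_closedBall, dist_eq_norm] using
          (by simpa [Metric.mem_closedBall, dist_eq_norm] using hball : ‖(⟨x, hxN⟩ : N)‖ ≤ 1)
      · rintro ⟨hxN, hball⟩
        exact ⟨⟨x, hxN⟩, by
          simpa [Metric.mem_closedBall, dist_eq_norm] using
            (by simpa [Metric.mem_closedBall, dist_eq_norm] using hball : ‖x‖ ≤ 1), rfl⟩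
    rw [himg]; exact hcomp
  exact FiniteDimensional.of_isCompact_closedBall₀ ℂ zero_lt_one hball

lemma closed_range_one_sub (K : G →L[ℂ] G) (hK : IsCompactOperator K) :
    IsClosed ((LinearMap.range ((1 - K : G →L[ℂ] G) : G →ₗ[ℂ] G) : Submodule ℂ G) : Set G) := by
  set S : G →L[ℂ] G := 1 - K with hSdef
  have hSapp : ∀ x, S x = x - K x := fun x => rfl
  set N : Submodule ℂ G := LinearMap.ker (S : G →ₗ[ℂ] G) with hN
  have hNc : IsClosed (N : Set G) := ContinuousLinearMap.isClosed_ker S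
  haveI hfd : FiniteDimensional ℂ ↥N := by
    refine findim_of_bound N hNc K hK 1 fun u hu => ?_
    have h0 : S u = 0 := hu
    rw [hSapp] at h0
    have h1 : u = K u := by
      have := sub_eq_zero.mp h0; exact this
    rw [← h1]
    exact le_of_eq (one_mul _).symm
  haveI : CompleteSpace ↥N := FiniteDimensional.complete ℂ ↥N
  -- bounded below on Nᗮ
  have hbb : ∃ c, ∀ u ∈ Nᗮ, ‖u‖ ≤ c * ‖S u‖ := by
    by_contra hcon
    push_neg at hcon
    choose v hv1 hv2 using fun n : ℕ => hcon (n + 1)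
    have hvnorm : ∀ n, 0 < ‖v n‖ := by
      intro n
      rcases (norm_nonneg (v n)).lt_or_eq with h | h
      · exact h
      · exfalso
        have := hv2 n
        rw [← h] at this
        have : ((n:ℝ) + 1) * ‖S (v n)‖ < 0 := this
        nlinarith [norm_nonneg (S (v n))]
    set u : ℕ → G := fun n => ‖v n‖⁻¹ • v n with hu
    have humem : ∀ n, u n ∈ Nᗮ := fun n => Submodule.smul_mem _ _ (hv1 n)
    have hunorm : ∀ n, ‖u n‖ = 1 := fun n => by
      rw [hu, norm_smul, norm_inv, norm_norm, inv_mul_cancel₀ (hvnorm n).ne']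
    have hSu : Tendsto (fun n => S (u n)) atTop (𝓝 0) := by
      have hb : ∀ n : ℕ, ‖S (u n)‖ ≤ 1 / ((n:ℝ) + 1) := by
        intro n
        have h2 := hv2 n
        have heq : ‖S (u n)‖ = ‖v n‖⁻¹ * ‖S (v n)‖ := by
          rw [hu]; simp [map_smul, norm_smul, norm_inv, norm_norm]
        have h3 : ‖S (v n)‖ < ‖v n‖ / ((n:ℝ)+1) := by
          rw [lt_div_iff₀ (by positivity : (0:ℝ) < (n:ℝ)+1)]
          linarith [h2, mul_comm ((n:ℝ)+1) ‖S (v n)‖]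
        have h4 := mul_lt_mul_of_pos_left h3 (inv_pos.mpr (hvnorm n))
        rw [heq]
        refine h4.le.trans (le_of_eq ?_)
        field_simp
        rw [div_self (hvnorm n).ne']
      exact squeeze_zero_norm (fun n => by simpa using hb n)
        tendsto_one_div_add_atTop_nhds_zero_nat
    obtain ⟨φ, y, hφ, hKu⟩ := compactOp_subseq hK u fun n => (hunorm n).le
    have huconv : Tendsto (fun n => u (φ n)) atTop (𝓝 y) := by
      have : (fun n => u (φ n)) = fun n => S (u (φ n)) + K (u (φ n)) := by
        funext n; rw [hSapp]; abel
      rw [this]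
      have h0 : Tendsto (fun n => S (u (φ n))) atTop (𝓝 0) :=
        hSu.comp (hφ.tendsto_atTop)
      simpa using h0.add hKu
    have hynorm : ‖y‖ = 1 := by
      have := (continuous_norm.tendsto y).comp huconv
      have h1 : Tendsto (fun n => ‖u (φ n)‖) atTop (𝓝 ‖y‖) := this
      have h2 : (fun n : ℕ => ‖u (φ n)‖) = fun _ => (1:ℝ) := funext fun n => hunorm (φ n)
      rw [h2] at h1
      exact (tendsto_const_nhds_iff.mp h1).symm
    have hyN : y ∈ N := by
      have h0 : Tendsto (fun n => S (u (φ n))) atTop (𝓝 (S y)) :=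
        (S.continuous.tendsto y).comp huconv
      have h1 : Tendsto (fun n => S (u (φ n))) atTop (𝓝 0) := hSu.comp hφ.tendsto_atTop
      have := tendsto_nhds_unique h0 h1
      exact this
    have hyNo : y ∈ Nᗮ :=
      (Submodule.isClosed_orthogonal N).mem_of_tendsto huconv
        (Eventually.of_forall fun n => humem (φ n))
    have : y = 0 := by
      have := Submodule.inner_right_of_mem_orthogonal hyN hyNo
      simpa [inner_self_eq_zero] using this
    rw [this] at hynorm; simp at hynorm
  obtain ⟨c, hc⟩ := hbb
  -- range S = S '' Nᗮ
  have hsup : N ⊔ Nᗮ = ⊤ := Submodule.sup_orthogonal_of_hasOrthogonalProjection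
  have hrange : ((LinearMap.range (S : G →ₗ[ℂ] G) : Submodule ℂ G) : Set G) = S '' (Nᗮ : Set G) := by
    ext y
    constructor
    · rintro ⟨x, rfl⟩
      have : x ∈ N ⊔ Nᗮ := by rw [hsup]; trivial
      obtain ⟨a, ha, b, hb, rfl⟩ := Submodule.mem_sup.mp this
      have haS : S a = 0 := ha
      exact ⟨b, hb, by rw [ContinuousLinearMap.coe_coe, map_add, haS, zero_add]⟩
    · rintro ⟨m, _, rfl⟩
      exact ⟨m, rfl⟩
  rw [hrange]
  refine isClosed_of_closure_subset fun y hy => ?_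
  obtain ⟨w, hw, hwy⟩ := mem_closure_iff_seq_limit.mp hy
  choose m hm1 hm2 using hw
  have hmc : CauchySeq m := by
    rw [Metric.cauchySeq_iff]
    intro ε hε
    have hc0 : 0 < max c 1 := lt_of_lt_of_le zero_lt_one (le_max_right c 1)
    have hwc : CauchySeq w := hwy.cauchySeq
    rw [Metric.cauchySeq_iff] at hwc
    obtain ⟨M, hM⟩ := hwc (ε / max c 1) (by positivity)
    refine ⟨M, fun i hi j hj => ?_⟩
    have hmem : m i - m j ∈ Nᗮ := sub_mem (hm1 i) (hm1 j)
    have h1 : ‖m i - m j‖ ≤ c * ‖S (m i - m j)‖ := hc _ hmem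
    have h1' : ‖m i - m j‖ ≤ max c 1 * ‖S (m i - m j)‖ := by
      refine h1.trans ?_
      have := norm_nonneg (S (m i - m j))
      nlinarith [le_max_left c 1]
    rw [map_sub, hm2 i, hm2 j] at h1'
    calc dist (m i) (m j) = ‖m i - m j‖ := dist_eq_norm _ _
      _ ≤ max c 1 * ‖w i - w j‖ := h1'
      _ < max c 1 * (ε / max c 1) := by
          have := hM i hi j hj
          rw [dist_eq_norm] at this
          exact (mul_lt_mul_iff_right₀ hc0).mpr this
      _ = ε := by field_simp
  obtain ⟨x, hx⟩ := cauchySeq_tendsto_of_complete hmc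
  have hxO : x ∈ Nᗮ := (Submodule.isClosed_orthogonal N).mem_of_tendsto hx
    (Eventually.of_forall hm1)
  refine ⟨x, hxO, ?_⟩
  have h0 : Tendsto (fun n => S (m n)) atTop (𝓝 (S x)) := (S.continuous.tendsto x).comp hx
  have h1 : Tendsto (fun n => S (m n)) atTop (𝓝 y) := by
    have : (fun n => S (m n)) = w := funext hm2
    rw [this]; exact hwy
  exact tendsto_nhds_unique h0 h1

lemma dense_eq_top_of_contains_closed {W V : Submodule ℂ G} (hWV : W ≤ V)
    (hWc : IsClosed (W : Set G)) (hfd : FiniteDimensional ℂ ↥Wᗮ)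
    (hd : Dense (V : Set G)) : V = ⊤ := by
  haveI : CompleteSpace W := hWc.completeSpace_coe
  set F : Submodule ℂ G := V ⊓ Wᗮ with hF
  haveI hFfd : FiniteDimensional ℂ ↥F := Submodule.finiteDimensional_of_le inf_le_right
  have hFc : IsClosed (F : Set G) := Submodule.closed_of_finiteDimensional F
  set q : G → G := fun x => x - (W.orthogonalProjectionOnto x : G) with hq
  have hqc : Continuous q :=
    continuous_id.sub (continuous_subtype_val.comp (W.orthogonalProjectionOnto).continuous)
  have h1 : ∀ v ∈ V, q v ∈ F :=
    fun v hv => ⟨sub_mem hv (hWV (W.orthogonalProjectionOnto v).2),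
      W.sub_starProjection_mem_orthogonal v⟩
  have hVc : IsClosed (V : Set G) := by
    refine isClosed_of_closure_subset fun x hx => ?_
    have h2 : q x ∈ closure (q '' (V : Set G)) :=
      image_closure_subset_closure_image hqc ⟨x, hx, rfl⟩
    have h3 : closure (q '' (V : Set G)) ⊆ (F : Set G) := by
      refine closure_minimal ?_ hFc
      rintro _ ⟨v, hv, rfl⟩
      exact h1 v hv
    have h4 : q x ∈ F := h3 h2
    have h5 : x = (W.orthogonalProjectionOnto x : G) + q x := by simp [hq]
    rw [h5]
    exact V.add_mem (hWV (W.orthogonalProjectionOnto x).2) h4.1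
  have : (V : Set G) = Set.univ := by
    rw [← hVc.closure_eq, hd.closure_eq]
  rw [Submodule.eq_top_iff']
  intro x
  have : x ∈ (V : Set G) := this ▸ Set.mem_univ x
  exact this

lemma isUnit_one_sub_swap {R : Type*} [Ring R] {a b : R} (h : IsUnit (1 - a * b)) :
    IsUnit (1 - b * a) := by
  obtain ⟨u, hu⟩ := h
  have h1 : (1 - a * b) * ↑u⁻¹ = 1 := by rw [← hu]; exact u.mul_inv
  have h2 : (↑u⁻¹ : R) * (1 - a * b) = 1 := by rw [← hu]; exact u.inv_mul
  refine isUnit_iff_exists.mpr ⟨1 + b * ↑u⁻¹ * a, ?_, ?_⟩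
  · have e1 : a * (b * (↑u⁻¹ : R)) = ↑u⁻¹ - 1 := by
      have := h2
      have : (↑u⁻¹ : R) - a * b * ↑u⁻¹ = 1 := by
        calc (↑u⁻¹ : R) - a * b * ↑u⁻¹ = (1 - a * b) * ↑u⁻¹ := by noncomm_ring
          _ = 1 := h1
      calc a * (b * (↑u⁻¹ : R)) = a * b * ↑u⁻¹ := by noncomm_ring
        _ = ↑u⁻¹ - 1 := by linear_combination (norm := noncomm_ring) -this
    calc (1 - b * a) * (1 + b * ↑u⁻¹ * a)
        = 1 + b * ↑u⁻¹ * a - b * a - b * (a * (b * ↑u⁻¹)) * a := by noncomm_ring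
      _ = 1 + b * ↑u⁻¹ * a - b * a - b * (↑u⁻¹ - 1) * a := by rw [e1]
      _ = 1 := by noncomm_ring
  · have e2 : (↑u⁻¹ : R) * (a * b) = ↑u⁻¹ - 1 := by
      linear_combination (norm := noncomm_ring) -h2
    calc (1 + b * ↑u⁻¹ * a) * (1 - b * a)
        = 1 + b * ↑u⁻¹ * a - b * a - b * (↑u⁻¹ * (a * b)) * a := by noncomm_ring
      _ = 1 + b * ↑u⁻¹ * a - b * a - b * (↑u⁻¹ - 1) * a := by rw [e2]
      _ = 1 := by noncomm_ring

section PMapHelpers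

lemma pmap_apply_congr {f g : H →ₗ.[ℂ] H} (h : f = g) {x : f.domain} {y : g.domain}
    (hxy : (x : H) = (y : H)) : f x = g y := by
  subst h
  congr 1
  exact Subtype.ext hxy

variable {G' : Type*} [AddCommGroup G'] [Module ℂ G']
variable {T : H →ₗ.[ℂ] H} {Γ : T.domain →ₗ[ℂ] G'}

lemma mem_kerRestrict {x : H} :
    x ∈ (kerRestrict T Γ).domain ↔ ∃ f : T.domain, Γ f = 0 ∧ (f : H) = x := by
  constructor
  · rintro ⟨⟨f, hf, hfx⟩, -⟩
    exact ⟨f, hf, hfx⟩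
  · rintro ⟨f, hf, rfl⟩
    exact ⟨⟨f, hf, rfl⟩, f.2⟩

lemma kerRestrict_apply (x : (kerRestrict T Γ).domain) {f : T.domain} (h : (x : H) = (f : H)) :
    kerRestrict T Γ x = T f :=
  LinearPMap.domRestrict_apply h

variable {z : ℂ} {R : H →L[ℂ] H}

lemma res_exists (h : IsResolventAt (kerRestrict T Γ) z R) (x : H) :
    ∃ f : T.domain, (f : H) = R x ∧ Γ f = 0 ∧ T f = x + z • R x := by
  obtain ⟨hx, heq⟩ := h.1 x
  obtain ⟨f, hf0, hfx⟩ := mem_kerRestrict.mp hx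
  refine ⟨f, hfx, hf0, ?_⟩
  rw [kerRestrict_apply ⟨R x, hx⟩ hfx.symm] at heq
  rw [sub_eq_iff_eq_add] at heq
  exact heq

lemma res_inv (h : IsResolventAt (kerRestrict T Γ) z R) (f : T.domain) (hf : Γ f = 0) :
    R (T f - z • (f : H)) = (f : H) := by
  have mem : (f : H) ∈ (kerRestrict T Γ).domain := mem_kerRestrict.mpr ⟨f, hf, rfl⟩
  have h2 := h.2 ⟨(f : H), mem⟩
  rwa [kerRestrict_apply ⟨(f : H), mem⟩ rfl] at h2

lemma eigen_zero (h : IsResolventAt (kerRestrict T Γ) z R) (f : T.domain) (hf : Γ f = 0)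
    (he : T f = z • (f : H)) : (f : H) = 0 := by
  have h2 := res_inv h f hf
  rw [he, sub_self, map_zero] at h2
  exact h2.symm

lemma defect_shift (h : IsResolventAt (kerRestrict T Γ) z R) (f : T.domain) :
    ∃ g : T.domain, T g = z • (g : H) ∧ Γ g = Γ f ∧
      (g : H) = (f : H) - R (T f - z • (f : H)) := by
  obtain ⟨p, hpc, hp0, hpT⟩ := res_exists h (T f - z • (f : H))
  refine ⟨f - p, ?_, by simp [hp0], by simp [hpc]⟩
  have hc : ((f - p : T.domain) : H) = (f : H) - (p : H) := rfl
  have hms : T (f - p) = T f - T p := T.map_sub f p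
  rw [hms, hpT, hc, hpc, smul_sub]
  abel

end PMapHelpers

end KreinHelpers

/-- Self-adjointness of the non-local Robin realization `A_[B] = T ↾ ker(BΓ1 − Γ0)` and
Krein's formula.  Assume `ran Γ0 = G`, `A1 = T ↾ ker Γ1` is self-adjoint and the Weyl
function `M(λ0)` is compact at some point `λ0 ∈ ρ(A0)`.  Then for bounded self-adjoint `B`,
`A_[B]` is self-adjoint; moreover if `λ ∈ ρ(A_[B]) ∩ ρ(A0)` then `I − BM(λ)` and
`I − M(λ)B` are boundedly invertible and
`(A_[B] − λ)⁻¹ − (A0 − λ)⁻¹ = γ(λ)(I − BM(λ))⁻¹ B γ(λ̄)* = γ(λ) B (I − M(λ)B)⁻¹ γ(λ̄)*`. -/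
theorem robin_selfAdjoint_and_krein
    (T : H →ₗ.[ℂ] H) (Γ0 Γ1 : T.domain →ₗ[ℂ] G)
    (hQBT : IsQuasiBoundaryTriple T Γ0 Γ1)
    (hsurj : Function.Surjective Γ0)
    (hA1 : IsSelfAdjoint (kerRestrict T Γ1))
    -- compactness of the Weyl function at some `λ0 ∈ ρ(A0)`:
    {lam0 : ℂ} (R00 : H →L[ℂ] H) (hR00 : IsResolventAt (kerRestrict T Γ0) lam0 R00)
    (Mlam0 : G →L[ℂ] G)
    (hMlam0 : ∀ f : T.domain, T f = lam0 • (f : H) → Mlam0 (Γ0 f) = Γ1 f)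
    (hMcpt : IsCompactOperator Mlam0)
    -- the boundary parameter:
    (B : G →L[ℂ] G) (hB : IsSelfAdjoint B)
    -- spectral data at `λ ∈ ρ(A_[B]) ∩ ρ(A0)`:
    {lam : ℂ} (RB R0 : H →L[ℂ] H)
    (hRB : IsResolventAt (kerRestrict T ((B : G →ₗ[ℂ] G) ∘ₗ Γ1 - Γ0)) lam RB)
    (hR0 : IsResolventAt (kerRestrict T Γ0) lam R0)
    (Mlam : G →L[ℂ] G)
    (hMlam : ∀ f : T.domain, T f = lam • (f : H) → Mlam (Γ0 f) = Γ1 f)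
    (γstarlam : H →L[ℂ] G)
    (hγstar : ∀ x : H, ∃ hx : R0 x ∈ T.domain, γstarlam x = Γ1 ⟨R0 x, hx⟩) :
    -- `A_[B]` is self-adjoint:
    IsSelfAdjoint (kerRestrict T ((B : G →ₗ[ℂ] G) ∘ₗ Γ1 - Γ0)) ∧
    -- `(I − BM(λ))⁻¹, (I − M(λ)B)⁻¹ ∈ B(G)`:
    IsUnit (1 - B ∘L Mlam) ∧ IsUnit (1 - Mlam ∘L B) ∧
    -- Krein's formula, in both factorized forms:
    (∀ x : H, ∃ f : T.domain,
      T f = lam • (f : H) ∧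
      Γ0 f = Ring.inverse (1 - B ∘L Mlam) (B (γstarlam x)) ∧
      Γ0 f = B (Ring.inverse (1 - Mlam ∘L B) (γstarlam x)) ∧
      RB x - R0 x = (f : H)) := by
  obtain ⟨hTdense, hjoint, hA0sa, green, -⟩ := hQBT
  set N : T.domain →ₗ[ℂ] G := (B : G →ₗ[ℂ] G) ∘ₗ Γ1 - Γ0 with hNdef
  have hNapp : ∀ f : T.domain, N f = B (Γ1 f) - Γ0 f := fun f => rfl
  -- surjectivity of `Γ0` restricted to defect subspaces
  have surjN : ∀ {z : ℂ} {R : H →L[ℂ] H}, IsResolventAt (kerRestrict T Γ0) z R →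
      ∀ g : G, ∃ f : T.domain, T f = z • (f : H) ∧ Γ0 f = g := by
    intro z R h g
    obtain ⟨f, hf⟩ := hsurj g
    obtain ⟨u, h1, h2, -⟩ := defect_shift h f
    exact ⟨u, h1, h2.trans hf⟩
  have hBsym : ∀ a b : G, (inner ℂ (B a) b : ℂ) = inner ℂ a (B b) := by
    intro a b
    have hB' : ContinuousLinearMap.adjoint B = B := ContinuousLinearMap.isSelfAdjoint_iff'.mp hB
    have h := ContinuousLinearMap.adjoint_inner_left B b a
    rw [hB'] at h
    exact h
  set lamb : ℂ := (starRingEnd ℂ) lam with hlamb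
  set R0' : H →L[ℂ] H := ContinuousLinearMap.adjoint R0 with hR0'def
  -- `R0'` is a resolvent for `A0` at `conj lam`
  have hA0eq : (kerRestrict T Γ0).adjoint = kerRestrict T Γ0 :=
    LinearPMap.isSelfAdjoint_def.mp hA0sa
  have hA0dense : Dense ((kerRestrict T Γ0).domain : Set H) := hA0sa.dense_domain
  -- A0 is symmetric (via the Green identity)
  have hA0symm : ∀ f g : T.domain, Γ0 f = 0 → Γ0 g = 0 →
      (inner ℂ (T f) ((g : H)) : ℂ) = inner ℂ ((f : H)) (T g) := by
    intro f g hf hg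
    have h := green f g
    rw [hf, hg] at h
    have h2 : (inner ℂ (T f) ((g : H)) : ℂ) - inner ℂ ((f : H)) (T g) = 0 := by
      rw [h]; simp
    exact sub_eq_zero.mp h2
  have hR0b : IsResolventAt (kerRestrict T Γ0) lamb R0' := by
    have key : ∀ x : H, ∀ v : (kerRestrict T Γ0).domain,
        (inner ℂ (x + lamb • R0' x) ((v : H)) : ℂ) = inner ℂ (R0' x) ((kerRestrict T Γ0) v) := by
      intro x v
      obtain ⟨f, hf0, hfv⟩ := mem_kerRestrict.mp v.2
      rw [kerRestrict_apply v hfv.symm]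
      have e1 : (inner ℂ (R0' x) (T f) : ℂ) = inner ℂ x (R0 (T f)) :=
        ContinuousLinearMap.adjoint_inner_left R0 (T f) x
      have e2 : R0 (T f) = (f : H) + lam • R0 (f : H) := by
        have h3 := res_inv hR0 f hf0
        calc R0 (T f) = R0 (T f - lam • (f : H)) + lam • R0 (f : H) := by
              rw [map_sub, map_smul]; abel
          _ = (f : H) + lam • R0 (f : H) := by rw [h3]
      rw [e1, e2]
      rw [inner_add_right, inner_smul_right, inner_add_left, inner_smul_left]
      have e3 : (inner ℂ x (R0 (f : H)) : ℂ) = inner ℂ (R0' x) ((f : H)) :=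
        (ContinuousLinearMap.adjoint_inner_left R0 (f : H) x).symm
      rw [e3, hfv, hlamb]
      simp [Complex.conj_conj]
    constructor
    · intro x
      have mem' : R0' x ∈ (kerRestrict T Γ0).adjoint.domain := by
        refine LinearPMap.mem_adjoint_domain_of_exists _ ⟨x + lamb • R0' x, fun v => key x v⟩
      have hdomeq : (kerRestrict T Γ0).adjoint.domain = (kerRestrict T Γ0).domain :=
        congrArg LinearPMap.domain hA0eq
      have mem : R0' x ∈ (kerRestrict T Γ0).domain := hdomeq ▸ mem'
      refine ⟨mem, ?_⟩
      have happ : (kerRestrict T Γ0).adjoint ⟨R0' x, mem'⟩ = x + lamb • R0' x :=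
        LinearPMap.adjoint_apply_eq hA0dense _ fun v => key x v
      have happ2 : (kerRestrict T Γ0) ⟨R0' x, mem⟩ = x + lamb • R0' x := by
        rw [← happ]
        exact (pmap_apply_congr hA0eq rfl).symm
      rw [happ2]; abel
    · intro v
      apply ext_inner_right ℂ
      intro t
      obtain ⟨f, hf0, hfv⟩ := mem_kerRestrict.mp v.2
      obtain ⟨g, hgc, hg0, hgT⟩ := res_exists hR0 t
      have e0 : (kerRestrict T Γ0) v = T f := kerRestrict_apply v hfv.symm
      have e1 : (inner ℂ (R0' ((kerRestrict T Γ0) v - lamb • (v : H))) t : ℂ)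
          = inner ℂ ((kerRestrict T Γ0) v - lamb • (v : H)) (R0 t) :=
        ContinuousLinearMap.adjoint_inner_left R0 t _
      rw [e1, e0]
      rw [inner_sub_left, inner_smul_left]
      have e2 : (inner ℂ (T f) (R0 t) : ℂ) = inner ℂ (T f) ((g : H)) := by rw [hgc]
      have e3 : (inner ℂ (T f) ((g : H)) : ℂ) = inner ℂ ((f : H)) (T g) := hA0symm f g hf0 hg0
      rw [e2, e3, hgT]
      rw [inner_add_right, inner_smul_right, ← hfv, hlamb, Complex.conj_conj]
      ring
  -- the first unit
  have hU1 : IsUnit (1 - B ∘L Mlam) := by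
    set S : G →L[ℂ] G := 1 - B ∘L Mlam with hSdef
    have hSapp : ∀ c : G, S c = c - B (Mlam c) := fun c => rfl
    have hNS : ∀ f : T.domain, ∃ c : G, S c = - N f := by
      intro f
      obtain ⟨g, hg1, hg2, -⟩ := defect_shift hRB f
      refine ⟨Γ0 g, ?_⟩
      rw [hSapp, hMlam g hg1, ← hg2, hNapp g]
      abel
    have hker : ∀ c : G, S c = 0 → c = 0 := by
      intro c hc
      obtain ⟨f, hf1, hf2⟩ := surjN hR0 c
      have hc' : c - B (Mlam c) = 0 := by rw [← hSapp]; exact hc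
      rw [sub_eq_zero] at hc'
      have hNf : N f = 0 := by
        rw [hNapp f, ← hMlam f hf1, hf2, ← hc', sub_self]
      have hzero := eigen_zero hRB f hNf hf1
      have hf0 : f = 0 := Subtype.ext (by rw [hzero]; rfl)
      rw [← hf2, hf0, map_zero]
    have hinj : Function.Injective S := by
      intro c d h
      have := hker (c - d) (by rw [map_sub, h, sub_self])
      exact sub_eq_zero.mp this
    have hVdense : Dense ((LinearMap.range N : Submodule ℂ G) : Set G) := by
      set φ : G × G →L[ℂ] G :=
        B ∘L (ContinuousLinearMap.snd ℂ G G) - ContinuousLinearMap.fst ℂ G G with hφdef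
      have hφapp : ∀ p : G × G, φ p = B p.2 - p.1 := fun p => rfl
      have hφsurj : Function.Surjective φ := fun g => ⟨(-g, 0), by rw [hφapp]; simp⟩
      have hdr : DenseRange (fun f : T.domain => ((Γ0 f, Γ1 f) : G × G)) := hjoint
      have hcomp : DenseRange (φ ∘ fun f : T.domain => ((Γ0 f, Γ1 f) : G × G)) :=
        (hφsurj.denseRange).comp hdr φ.continuous
      have hre : Set.range (φ ∘ fun f : T.domain => ((Γ0 f, Γ1 f) : G × G))
          = ((LinearMap.range N : Submodule ℂ G) : Set G) := by
        ext x
        simp only [Set.mem_range, Function.comp_apply, SetLike.mem_coe, LinearMap.mem_range]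
        constructor
        · rintro ⟨f, rfl⟩
          exact ⟨f, by rw [hNapp, hφapp]⟩
        · rintro ⟨f, rfl⟩
          exact ⟨f, by rw [hφapp, hNapp]⟩
      rw [← hre]
      exact hcomp
    have hW : ∀ c : G, ∃ f : T.domain, N f = - ((1 - B ∘L Mlam0) c) := by
      intro c
      obtain ⟨f, hf1, hf2⟩ := surjN hR00 c
      refine ⟨f, ?_⟩
      have h2 : (1 - B ∘L Mlam0) c = c - B (Mlam0 c) := rfl
      rw [hNapp, ← hMlam0 f hf1, hf2, h2]
      abel
    have hWle : LinearMap.range ((1 - B ∘L Mlam0 : G →L[ℂ] G) : G →ₗ[ℂ] G) ≤ LinearMap.range N := by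
      rintro x ⟨c, rfl⟩
      obtain ⟨f, hf⟩ := hW c
      exact ⟨-f, by rw [map_neg, hf, neg_neg]; rfl⟩
    have hKc : IsCompactOperator ⇑(B ∘L Mlam0) := hMcpt.continuous_comp B.continuous
    have hWclosed := closed_range_one_sub (B ∘L Mlam0) hKc
    have hWperp : FiniteDimensional ℂ ↥(LinearMap.range ((1 - B ∘L Mlam0 : G →L[ℂ] G) : G →ₗ[ℂ] G))ᗮ := by
      refine findim_of_bound _ (Submodule.isClosed_orthogonal _) Mlam0 hMcpt ‖B‖ ?_
      intro u hu
      have h0 : ((1 - B ∘L Mlam0) u) ∈ LinearMap.range ((1 - B ∘L Mlam0 : G →L[ℂ] G) : G →ₗ[ℂ] G) := ⟨u, rfl⟩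
      have h1 : (inner ℂ ((1 - B ∘L Mlam0 : G →L[ℂ] G) u) u : ℂ) = 0 :=
        (Submodule.mem_orthogonal _ u).mp hu _ h0
      have h2 : ((1 - B ∘L Mlam0 : G →L[ℂ] G) u) = u - B (Mlam0 u) := rfl
      rw [h2, inner_sub_left, sub_eq_zero] at h1
      have h4 : ‖u‖^2 ≤ ‖B (Mlam0 u)‖ * ‖u‖ := by
        have hcs := norm_inner_le_norm (𝕜 := ℂ) (B (Mlam0 u)) u
        have hself : ‖(inner ℂ u u : ℂ)‖ = ‖u‖^2 := by
          rw [inner_self_eq_norm_sq_to_K, norm_pow, RCLike.norm_ofReal,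
            abs_of_nonneg (norm_nonneg u)]
        calc ‖u‖^2 = ‖(inner ℂ u u : ℂ)‖ := hself.symm
          _ = ‖(inner ℂ (B (Mlam0 u)) u : ℂ)‖ := by rw [h1]
          _ ≤ _ := hcs
      have h5 : ‖B (Mlam0 u)‖ ≤ ‖B‖ * ‖Mlam0 u‖ := B.le_opNorm _
      rcases eq_or_lt_of_le (norm_nonneg u) with h | h
      · rw [← h]
        positivity
      · nlinarith
    have htop : (LinearMap.range N : Submodule ℂ G) = ⊤ :=
      dense_eq_top_of_contains_closed hWle hWclosed hWperp hVdense
    have hsurjS : Function.Surjective S := by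
      intro g
      have hmem : (-g) ∈ (LinearMap.range N : Submodule ℂ G) := by rw [htop]; trivial
      obtain ⟨f, hf⟩ := hmem
      obtain ⟨c, hc⟩ := hNS f
      exact ⟨c, by rw [hc, hf, neg_neg]⟩
    exact ContinuousLinearMap.isUnit_iff_bijective.mpr ⟨hinj, hsurjS⟩
  have hU2 : IsUnit (1 - Mlam ∘L B) := by
    have h1 : (1 - B ∘L Mlam) = 1 - B * Mlam := rfl
    have h2 : (1 - Mlam ∘L B) = 1 - Mlam * B := rfl
    rw [h2]
    exact isUnit_one_sub_swap (h1 ▸ hU1)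
  -- Krein's formula
  have hKrein : ∀ x : H, ∃ f : T.domain,
      T f = lam • (f : H) ∧
      Γ0 f = Ring.inverse (1 - B ∘L Mlam) (B (γstarlam x)) ∧
      Γ0 f = B (Ring.inverse (1 - Mlam ∘L B) (γstarlam x)) ∧
      RB x - R0 x = (f : H) := by
    intro x
    obtain ⟨fB, hfBc, hfB0, hfBT⟩ := res_exists hRB x
    obtain ⟨f0, hf0c, hf00, hf0T⟩ := res_exists hR0 x
    set f : T.domain := fB - f0 with hf
    have hcoe : (f : H) = RB x - R0 x := by
      rw [hf, Submodule.coe_sub, hfBc, hf0c]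
    have hTf : T f = lam • (f : H) := by
      have hms : T f = T fB - T f0 := T.map_sub fB f0
      rw [hms, hfBT, hf0T, hcoe, smul_sub]
      abel
    have hb : B (Γ1 fB) = Γ0 fB := by
      have h0 := hfB0
      rw [hNapp] at h0
      exact sub_eq_zero.mp h0
    have hγ : Γ1 f0 = γstarlam x := by
      obtain ⟨hx, hg⟩ := hγstar x
      have he : (⟨R0 x, hx⟩ : T.domain) = f0 := Subtype.ext (by rw [hf0c])
      rw [hg, he]
    have hΓ0f : Γ0 f = B (Γ1 fB) := by
      rw [hf, map_sub, hf00, sub_zero, hb]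
    have hM : Mlam (Γ0 f) = Γ1 f := hMlam f hTf
    have hΓ1f : Γ1 f = Γ1 fB - γstarlam x := by rw [hf, map_sub, hγ]
    have hid1 : (1 - B ∘L Mlam) (Γ0 f) = B (γstarlam x) := by
      have h0 : (1 - B ∘L Mlam) (Γ0 f) = Γ0 f - B (Mlam (Γ0 f)) := rfl
      rw [h0, hM, hΓ1f, hΓ0f, map_sub]
      abel
    have hid2 : (1 - Mlam ∘L B) (Γ1 fB) = γstarlam x := by
      have h0 : (1 - Mlam ∘L B) (Γ1 fB) = Γ1 fB - Mlam (B (Γ1 fB)) := rfl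
      rw [h0, ← hΓ0f, hM, hΓ1f]
      abel
    refine ⟨f, hTf, ?_, ?_, hcoe.symm⟩
    · rw [← hid1]
      have hinv := Ring.inverse_mul_cancel _ hU1
      calc Γ0 f = ((Ring.inverse (1 - B ∘L Mlam) * (1 - B ∘L Mlam)) : G →L[ℂ] G) (Γ0 f) := by
            rw [hinv]; rfl
        _ = Ring.inverse (1 - B ∘L Mlam) ((1 - B ∘L Mlam) (Γ0 f)) := rfl
    · have hinv := Ring.inverse_mul_cancel _ hU2
      have h5 : Ring.inverse (1 - Mlam ∘L B) (γstarlam x) = Γ1 fB := by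
        rw [← hid2]
        calc Ring.inverse (1 - Mlam ∘L B) ((1 - Mlam ∘L B) (Γ1 fB))
            = ((Ring.inverse (1 - Mlam ∘L B) * (1 - Mlam ∘L B)) : G →L[ℂ] G) (Γ1 fB) := rfl
          _ = Γ1 fB := by rw [hinv]; rfl
      rw [h5, hΓ0f]
  -- self-adjointness
  have hSA : IsSelfAdjoint (kerRestrict T N) := by
    have symAB : ∀ f g : T.domain, N f = 0 → N g = 0 →
        (inner ℂ (T f) ((g : H)) : ℂ) = inner ℂ ((f : H)) (T g) := by
      intro f g hf hg
      have h := green f g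
      have hbf : B (Γ1 f) = Γ0 f := by rw [hNapp] at hf; exact sub_eq_zero.mp hf
      have hbg : B (Γ1 g) = Γ0 g := by rw [hNapp] at hg; exact sub_eq_zero.mp hg
      have hrhs : (inner ℂ (Γ1 f) (Γ0 g) : ℂ) - inner ℂ (Γ0 f) (Γ1 g) = 0 := by
        rw [← hbf, ← hbg, hBsym (Γ1 f) (Γ1 g), sub_self]
      rw [hrhs] at h
      exact sub_eq_zero.mp h
    set Mb : G →L[ℂ] G := ContinuousLinearMap.adjoint Mlam with hMbdef
    have hMlamb : ∀ f : T.domain, T f = lamb • (f : H) → Mb (Γ0 f) = Γ1 f := by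
      intro f hfT
      apply ext_inner_right ℂ
      intro b
      obtain ⟨g, hg1, hg2⟩ := surjN hR0 b
      have h := green f g
      have hlhs : (inner ℂ (T f) ((g : H)) : ℂ) - inner ℂ ((f : H)) (T g) = 0 := by
        rw [hfT, hg1, inner_smul_left, inner_smul_right, hlamb, Complex.conj_conj]
        ring
      rw [hlhs] at h
      have h2 : (inner ℂ (Γ1 f) (Γ0 g) : ℂ) = inner ℂ (Γ0 f) (Γ1 g) := sub_eq_zero.mp h.symm
      calc (inner ℂ (Mb (Γ0 f)) b : ℂ) = inner ℂ (Γ0 f) (Mlam b) :=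
            ContinuousLinearMap.adjoint_inner_left Mlam b (Γ0 f)
        _ = inner ℂ (Γ0 f) (Γ1 g) := by rw [← hg2, hMlam g hg1]
        _ = inner ℂ (Γ1 f) (Γ0 g) := h2.symm
        _ = inner ℂ (Γ1 f) b := by rw [hg2]
    have hUadj : IsUnit (1 - B ∘L Mb) := by
      have hstar : star (1 - Mlam ∘L B) = 1 - B ∘L Mb := by
        have h1 : star (1 - Mlam ∘L B) = 1 - star (Mlam ∘L B) := by
          rw [star_sub, star_one]
        rw [h1]
        congr 1
        have h2 : star (Mlam ∘L B) = ContinuousLinearMap.adjoint (Mlam ∘L B) := rfl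
        rw [h2, ContinuousLinearMap.adjoint_comp,
          ContinuousLinearMap.isSelfAdjoint_iff'.mp hB]
      rw [← hstar]
      exact hU2.star
    have hsurjABb : ∀ y : H, ∃ u : T.domain, N u = 0 ∧ T u - lamb • ((u : H)) = y := by
      intro y
      obtain ⟨g0, hg0c, hg00, hg0T⟩ := res_exists hR0b y
      set c : G := Ring.inverse (1 - B ∘L Mb) (B (Γ1 g0)) with hcdef
      have hc : (1 - B ∘L Mb) c = B (Γ1 g0) := by
        have hinv := Ring.mul_inverse_cancel _ hUadj
        calc (1 - B ∘L Mb) c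
            = (((1 - B ∘L Mb) * Ring.inverse (1 - B ∘L Mb)) : G →L[ℂ] G) (B (Γ1 g0)) := rfl
          _ = B (Γ1 g0) := by rw [hinv]; rfl
      obtain ⟨v, hv1, hv2⟩ := surjN hR0b c
      refine ⟨g0 + v, ?_, ?_⟩
      · have hΓ1v : Γ1 v = Mb c := by rw [← hv2]; exact (hMlamb v hv1).symm
        have hcc : c - B (Mb c) = B (Γ1 g0) := by
          have h0 : (1 - B ∘L Mb) c = c - B (Mb c) := rfl
          rw [← h0]; exact hc
        rw [hNapp]
        simp only [map_add]
        rw [hg00, hv2, zero_add, hΓ1v]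
        calc B (Γ1 g0) + B (Mb c) - c = B (Γ1 g0) - (c - B (Mb c)) := by abel
          _ = 0 := by rw [hcc, sub_self]
      · have hma : T (g0 + v) = T g0 + T v := T.map_add g0 v
        have hcoe : ((g0 + v : T.domain) : H) = R0' y + (v : H) := by
          rw [Submodule.coe_add, hg0c]
        rw [hma, hg0T, hv1, hcoe, smul_add]
        abel
    have hABdense : Dense ((kerRestrict T N).domain : Set H) := by
      rw [Submodule.dense_iff_topologicalClosure_eq_top,
        Submodule.topologicalClosure_eq_top_iff, Submodule.eq_bot_iff]
      intro y hy
      obtain ⟨u, hu1, hu2⟩ := hsurjABb y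
      have hu0 : (u : H) = 0 := by
        apply ext_inner_right ℂ
        intro x
        obtain ⟨fB, hfBc, hfB0, hfBT⟩ := res_exists hRB x
        have hmem : RB x ∈ (kerRestrict T N).domain := mem_kerRestrict.mpr ⟨fB, hfB0, hfBc⟩
        have h0 : (inner ℂ (RB x) y : ℂ) = 0 :=
          (Submodule.mem_orthogonal _ y).mp hy _ hmem
        have e1 : (inner ℂ y (RB x) : ℂ) = 0 := by
          rw [← inner_conj_symm, h0, map_zero]
        have e3 : (inner ℂ (T u) (RB x) : ℂ) = inner ℂ ((u : H)) (T fB) := by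
          rw [← hfBc]
          exact symAB u fB hu1 hfB0
        have e2 : (inner ℂ y (RB x) : ℂ) = inner ℂ ((u : H)) x := by
          rw [← hu2, inner_sub_left, inner_smul_left, hlamb, Complex.conj_conj, e3, hfBT,
            inner_add_right, inner_smul_right]
          ring
        rw [e2] at e1
        rw [e1, inner_zero_left]
      have hu00 : u = 0 := Subtype.ext (by rw [hu0]; rfl)
      rw [← hu2, hu00]
      have : T (0 : T.domain) = 0 := T.map_zero
      rw [this]
      simp
    have hmax : ∀ (u w : H),
        (∀ a : (kerRestrict T N).domain, (inner ℂ w ((a : H)) : ℂ) = inner ℂ u ((kerRestrict T N) a)) →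
        ∃ v : T.domain, N v = 0 ∧ (v : H) = u ∧ T v = w := by
      intro u w hw
      obtain ⟨v, hv0, hvT⟩ := hsurjABb (w - lamb • u)
      have hvc : (v : H) = u := by
        have hz : ∀ x : H, (inner ℂ (u - (v : H)) x : ℂ) = 0 := by
          intro x
          obtain ⟨fB, hfBc, hfB0, hfBT⟩ := res_exists hRB x
          have hmem : RB x ∈ (kerRestrict T N).domain := mem_kerRestrict.mpr ⟨fB, hfB0, hfBc⟩
          have h1 : (inner ℂ w (RB x) : ℂ) = inner ℂ u (T fB) := by
            have := hw ⟨RB x, hmem⟩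
            rwa [kerRestrict_apply ⟨RB x, hmem⟩ hfBc.symm] at this
          have h2 : (inner ℂ (T v) (RB x) : ℂ) = inner ℂ ((v : H)) (T fB) := by
            rw [← hfBc]
            exact symAB v fB hv0 hfB0
          have hTv : T v = w - lamb • u + lamb • (v : H) := sub_eq_iff_eq_add.mp hvT
          calc (inner ℂ (u - (v : H)) x : ℂ)
              = inner ℂ u x - inner ℂ ((v : H)) x := by rw [inner_sub_left]
            _ = (inner ℂ u (T fB) - lam * inner ℂ u (RB x))
                - (inner ℂ ((v : H)) (T fB) - lam * inner ℂ ((v : H)) (RB x)) := by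
                rw [hfBT, inner_add_right, inner_add_right, inner_smul_right, inner_smul_right]
                ring
            _ = (inner ℂ w (RB x) - lam * inner ℂ u (RB x))
                - (inner ℂ (T v) (RB x) - lam * inner ℂ ((v : H)) (RB x)) := by
                rw [h1, h2]
            _ = inner ℂ (w - T v) (RB x) - lam * inner ℂ (u - (v : H)) (RB x) := by
                rw [inner_sub_left, inner_sub_left]
                ring
            _ = inner ℂ (lamb • (u - (v : H))) (RB x) - lam * inner ℂ (u - (v : H)) (RB x) := by
                congr 2
                rw [hTv, smul_sub]
                abel
            _ = 0 := by
                rw [inner_smul_left, hlamb, Complex.conj_conj]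
                ring
        have := hz (u - (v : H))
        rw [inner_self_eq_zero] at this
        have h3 : u = (v : H) := by
          have := sub_eq_zero.mp this
          exact this
        exact h3.symm
      refine ⟨v, hv0, hvc, ?_⟩
      have h6 := hvT
      rw [hvc] at h6
      exact sub_left_inj.mp h6
    have hFA : (kerRestrict T N).IsFormalAdjoint (kerRestrict T N) := by
      intro a b
      obtain ⟨fa, ha0, hac⟩ := mem_kerRestrict.mp a.2
      obtain ⟨fb, hb0, hbc⟩ := mem_kerRestrict.mp b.2
      rw [kerRestrict_apply a hac.symm, kerRestrict_apply b hbc.symm, ← hac, ← hbc]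
      exact symAB fa fb ha0 hb0
    have le1 : kerRestrict T N ≤ (kerRestrict T N).adjoint := hFA.le_adjoint hABdense
    have hFA2 := LinearPMap.adjoint_isFormalAdjoint hABdense
    have le2 : (kerRestrict T N).adjoint ≤ kerRestrict T N := by
      refine ⟨?_, ?_⟩
      · intro uH huH
        obtain ⟨v, hv0, hvc, hvT⟩ :=
          hmax uH ((kerRestrict T N).adjoint ⟨uH, huH⟩) (fun a => hFA2 ⟨uH, huH⟩ a)
        exact mem_kerRestrict.mpr ⟨v, hv0, hvc⟩
      · intro a b hab
        obtain ⟨v, hv0, hvc, hvT⟩ :=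
          hmax (a : H) ((kerRestrict T N).adjoint a) (fun c => hFA2 a c)
        have hbv : (b : H) = (v : H) := by rw [← hab, hvc]
        rw [kerRestrict_apply b hbv]
        exact hvT.symm
    exact LinearPMap.isSelfAdjoint_def.mpr (le_antisymm le2 le1)
  exact ⟨hSA, hU1, hU2, hKrein⟩
end

section
/- Let T : U → B(G) on a domain U ⊆ ℂ be given by T(λ) = (I − B M(λ))^{-1}, where B ∈ B(G) and M : U → B(G) is holomorphic with all derivatives M^{(k)}(λ) belonging to the weak Schatten ideal S_{(n−1)/(2k+1),∞} for k ≥ 1. Then T'(λ) = T(λ) B M'(λ) T(λ), and for all k ∈ ℕ the derivative T^{(k)}(λ) belongs to S_{(n−1)/(2k+1),∞}(G). -/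
/-- The `k`-th singular value (approximation number) of a bounded operator. -/
noncomputable def singularValue {H K : Type*} [NormedAddCommGroup H] [InnerProductSpace ℂ H]
    [NormedAddCommGroup K] [InnerProductSpace ℂ K] (T : H →L[ℂ] K) (k : ℕ) : ℝ :=
  sInf {c : ℝ | ∃ F : H →L[ℂ] K,
    FiniteDimensional ℂ (LinearMap.range (F : H →ₗ[ℂ] K)) ∧
    Module.finrank ℂ (LinearMap.range (F : H →ₗ[ℂ] K)) ≤ k ∧ ‖T - F‖ = c}

/-- Membership in the weak Schatten–von Neumann class `S_{p,∞}`: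
`s_k(T) = O(k^{-1/p})`. -/
def MemWeakSchatten {H K : Type*} [NormedAddCommGroup H] [InnerProductSpace ℂ H]
    [NormedAddCommGroup K] [InnerProductSpace ℂ K] (p : ℝ) (T : H →L[ℂ] K) : Prop :=
  IsCompactOperator T ∧ ∃ C : ℝ, ∀ k : ℕ, singularValue T k ≤ C * ((k : ℝ) + 1) ^ (-(1 / p))

namespace WeakSchattenAux

variable {G : Type*} [NormedAddCommGroup G] [InnerProductSpace ℂ G] [CompleteSpace G]

/-- Finite rank (at most `k`) predicate. -/
def FR (k : ℕ) (F : G →L[ℂ] G) : Prop :=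
  FiniteDimensional ℂ (LinearMap.range (F : G →ₗ[ℂ] G)) ∧
    Module.finrank ℂ (LinearMap.range (F : G →ₗ[ℂ] G)) ≤ k

lemma fr_zero (k : ℕ) : FR k (0 : G →L[ℂ] G) := by
  have h : LinearMap.range ((0 : G →L[ℂ] G) : G →ₗ[ℂ] G) = ⊥ := by simp
  refine ⟨?_, ?_⟩
  · rw [h]; infer_instance
  · rw [h]; simp

lemma fr_comp_left (A : G →L[ℂ] G) {k : ℕ} {F : G →L[ℂ] G} (h : FR k F) : FR k (A * F) := by
  have := h.1
  have hr : LinearMap.range ((A * F : G →L[ℂ] G) : G →ₗ[ℂ] G) =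
      Submodule.map (A : G →ₗ[ℂ] G) (LinearMap.range (F : G →ₗ[ℂ] G)) := by
    rw [ContinuousLinearMap.mul_def, ContinuousLinearMap.toLinearMap_comp, LinearMap.range_comp]
  refine ⟨?_, ?_⟩
  · rw [hr]; exact Module.Finite.map _ _
  · rw [hr]; exact (Submodule.finrank_map_le _ _).trans h.2

lemma fr_comp_right {k : ℕ} {F : G →L[ℂ] G} (h : FR k F) (A : G →L[ℂ] G) : FR k (F * A) := by
  have := h.1
  have hr : LinearMap.range ((F * A : G →L[ℂ] G) : G →ₗ[ℂ] G) ≤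
      LinearMap.range (F : G →ₗ[ℂ] G) := by
    rw [ContinuousLinearMap.mul_def, ContinuousLinearMap.toLinearMap_comp]
    exact LinearMap.range_comp_le_range _ _
  exact ⟨Submodule.finiteDimensional_of_le hr, (Submodule.finrank_mono hr).trans h.2⟩

lemma fr_add {j k : ℕ} {F₁ F₂ : G →L[ℂ] G} (h₁ : FR j F₁) (h₂ : FR k F₂) :
    FR (j + k) (F₁ + F₂) := by
  have := h₁.1
  have := h₂.1
  have hr : LinearMap.range ((F₁ + F₂ : G →L[ℂ] G) : G →ₗ[ℂ] G) ≤
      LinearMap.range (F₁ : G →ₗ[ℂ] G) ⊔ LinearMap.range (F₂ : G →ₗ[ℂ] G) := by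
    intro y hy
    obtain ⟨x, rfl⟩ := LinearMap.mem_range.mp hy
    simp only [ContinuousLinearMap.coe_add, LinearMap.add_apply]
    exact Submodule.add_mem _
      (Submodule.mem_sup_left (LinearMap.mem_range_self _ x))
      (Submodule.mem_sup_right (LinearMap.mem_range_self _ x))
  haveI := Submodule.finiteDimensional_sup (LinearMap.range (F₁ : G →ₗ[ℂ] G))
    (LinearMap.range (F₂ : G →ₗ[ℂ] G))
  refine ⟨Submodule.finiteDimensional_of_le hr, (Submodule.finrank_mono hr).trans ?_⟩
  exact (Submodule.finrank_add_le_finrank_add_finrank _ _).trans (add_le_add h₁.2 h₂.2)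

/-- The approximation set defining `singularValue`. -/
def svSet (T : G →L[ℂ] G) (k : ℕ) : Set ℝ :=
  {c : ℝ | ∃ F : G →L[ℂ] G,
    FiniteDimensional ℂ (LinearMap.range (F : G →ₗ[ℂ] G)) ∧
    Module.finrank ℂ (LinearMap.range (F : G →ₗ[ℂ] G)) ≤ k ∧ ‖T - F‖ = c}

lemma singularValue_eq (T : G →L[ℂ] G) (k : ℕ) : singularValue T k = sInf (svSet T k) := rfl

lemma svSet_nonempty (T : G →L[ℂ] G) (k : ℕ) : (svSet T k).Nonempty :=
  ⟨‖T - 0‖, 0, (fr_zero k).1, (fr_zero k).2, rfl⟩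

lemma svSet_bddBelow (T : G →L[ℂ] G) (k : ℕ) : BddBelow (svSet T k) := by
  refine ⟨0, ?_⟩
  rintro c ⟨F, -, -, rfl⟩
  positivity

lemma sv_le {T : G →L[ℂ] G} {k : ℕ} {F : G →L[ℂ] G} (h : FR k F) :
    singularValue T k ≤ ‖T - F‖ :=
  csInf_le (svSet_bddBelow T k) ⟨F, h.1, h.2, rfl⟩

lemma sv_nonneg (T : G →L[ℂ] G) (k : ℕ) : 0 ≤ singularValue T k := by
  rw [singularValue_eq]
  refine le_csInf (svSet_nonempty T k) ?_
  rintro c ⟨F, -, -, rfl⟩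
  positivity

lemma sv_exists (T : G →L[ℂ] G) (k : ℕ) {ε : ℝ} (hε : 0 < ε) :
    ∃ F : G →L[ℂ] G, FR k F ∧ ‖T - F‖ < singularValue T k + ε := by
  have h := exists_lt_of_csInf_lt (svSet_nonempty T k)
    (lt_add_of_pos_right (sInf (svSet T k)) hε)
  obtain ⟨c, hc, hlt⟩ := h
  obtain ⟨F, h1, h2, rfl⟩ := hc
  exact ⟨F, ⟨h1, h2⟩, hlt⟩

lemma sv_antitone (T : G →L[ℂ] G) {j k : ℕ} (h : j ≤ k) :
    singularValue T k ≤ singularValue T j := by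
  rw [singularValue_eq, singularValue_eq]
  refine csInf_le_csInf (svSet_bddBelow T k) (svSet_nonempty T j) ?_
  rintro c ⟨F, h1, h2, rfl⟩
  exact ⟨F, h1, h2.trans h, rfl⟩

lemma sv_comp_left (A T : G →L[ℂ] G) (k : ℕ) :
    singularValue (A * T) k ≤ ‖A‖ * singularValue T k := by
  refine le_of_forall_pos_le_add fun ε hε => ?_
  have ha : (0 : ℝ) < ‖A‖ + 1 := by positivity
  have hδ : 0 < ε / (‖A‖ + 1) := by positivity
  obtain ⟨F, hF, hlt⟩ := sv_exists T k hδ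
  have h1 : singularValue (A * T) k ≤ ‖A * T - A * F‖ := sv_le (fr_comp_left A hF)
  have h2 : A * T - A * F = A * (T - F) := by
    ext x
    simp [ContinuousLinearMap.mul_apply]
  rw [h2] at h1
  have h3 : ‖A * (T - F)‖ ≤ ‖A‖ * ‖T - F‖ := by
    rw [ContinuousLinearMap.mul_def]
    exact ContinuousLinearMap.opNorm_comp_le _ _
  have h4 : ‖A‖ * ‖T - F‖ ≤ ‖A‖ * (singularValue T k + ε / (‖A‖ + 1)) :=
    mul_le_mul_of_nonneg_left hlt.le (norm_nonneg A)
  have h5 : ‖A‖ * (ε / (‖A‖ + 1)) ≤ ε := by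
    rw [show ‖A‖ * (ε / (‖A‖ + 1)) = ε * (‖A‖ / (‖A‖ + 1)) by ring]
    have h6 : ‖A‖ / (‖A‖ + 1) ≤ 1 := by
      rw [div_le_one ha]; linarith
    nlinarith [norm_nonneg A]
  nlinarith [norm_nonneg A]

lemma sv_comp_right (T A : G →L[ℂ] G) (k : ℕ) :
    singularValue (T * A) k ≤ ‖A‖ * singularValue T k := by
  refine le_of_forall_pos_le_add fun ε hε => ?_
  have ha : (0 : ℝ) < ‖A‖ + 1 := by positivity
  have hδ : 0 < ε / (‖A‖ + 1) := by positivity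
  obtain ⟨F, hF, hlt⟩ := sv_exists T k hδ
  have h1 : singularValue (T * A) k ≤ ‖T * A - F * A‖ := sv_le (fr_comp_right hF A)
  have h2 : T * A - F * A = (T - F) * A := by
    ext x
    simp [ContinuousLinearMap.mul_apply]
  rw [h2] at h1
  have h3 : ‖(T - F) * A‖ ≤ ‖T - F‖ * ‖A‖ := by
    rw [ContinuousLinearMap.mul_def]
    exact ContinuousLinearMap.opNorm_comp_le _ _
  have h4 : ‖T - F‖ * ‖A‖ ≤ (singularValue T k + ε / (‖A‖ + 1)) * ‖A‖ :=
    mul_le_mul_of_nonneg_right hlt.le (norm_nonneg A)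
  have h5 : (ε / (‖A‖ + 1)) * ‖A‖ ≤ ε := by
    rw [show (ε / (‖A‖ + 1)) * ‖A‖ = ε * (‖A‖ / (‖A‖ + 1)) by ring]
    have h6 : ‖A‖ / (‖A‖ + 1) ≤ 1 := by
      rw [div_le_one ha]; linarith
    nlinarith [norm_nonneg A]
  nlinarith [norm_nonneg A]

lemma sv_add (T S : G →L[ℂ] G) (j k : ℕ) :
    singularValue (T + S) (j + k) ≤ singularValue T j + singularValue S k := by
  refine le_of_forall_pos_le_add fun ε hε => ?_
  obtain ⟨F, hF, hF'⟩ := sv_exists T j (half_pos hε)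
  obtain ⟨F', hG, hG'⟩ := sv_exists S k (half_pos hε)
  have h1 : singularValue (T + S) (j + k) ≤ ‖T + S - (F + F')‖ := sv_le (fr_add hF hG)
  have h2 : T + S - (F + F') = (T - F) + (S - F') := by abel
  rw [h2] at h1
  have h3 : ‖(T - F) + (S - F')‖ ≤ ‖T - F‖ + ‖S - F'‖ := norm_add_le _ _
  linarith

lemma sv_mul (T S : G →L[ℂ] G) (j k : ℕ) :
    singularValue (T * S) (j + k) ≤ singularValue T j * singularValue S k := by
  refine le_of_forall_pos_le_add fun ε hε => ?_
  set a := singularValue T j with ha'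
  set b := singularValue S k with hb'
  have ha : 0 ≤ a := sv_nonneg T j
  have hb : 0 ≤ b := sv_nonneg S k
  have habs : (0 : ℝ) < a + b + 1 := by positivity
  set δ := min 1 (ε / (a + b + 1)) with hδdef
  have hδ : 0 < δ := lt_min one_pos (by positivity)
  obtain ⟨F, hF, hF'⟩ := sv_exists T j hδ
  obtain ⟨F', hG, hG'⟩ := sv_exists S k hδ
  have happrox : FR (j + k) (F * S + (T - F) * F') :=
    fr_add (fr_comp_right hF S) (fr_comp_left (T - F) hG)
  have h1 : singularValue (T * S) (j + k) ≤ ‖T * S - (F * S + (T - F) * F')‖ := sv_le happrox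
  have h2 : T * S - (F * S + (T - F) * F') = (T - F) * (S - F') := by
    ext x
    simp only [ContinuousLinearMap.sub_apply, ContinuousLinearMap.add_apply,
      ContinuousLinearMap.mul_apply, map_sub]
    abel
  rw [h2] at h1
  have h3 : ‖(T - F) * (S - F')‖ ≤ ‖T - F‖ * ‖S - F'‖ := by
    rw [ContinuousLinearMap.mul_def]
    exact ContinuousLinearMap.opNorm_comp_le _ _
  have h4 : ‖T - F‖ * ‖S - F'‖ ≤ (a + δ) * (b + δ) := by
    apply mul_le_mul hF'.le hG'.le (norm_nonneg _)
    positivity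
  have h5 : (a + δ) * (b + δ) = a * b + δ * (a + b + δ) := by ring
  have hδ1 : δ ≤ 1 := min_le_left _ _
  have hδ2 : δ ≤ ε / (a + b + 1) := min_le_right _ _
  have h6 : δ * (a + b + δ) ≤ (ε / (a + b + 1)) * (a + b + 1) := by
    apply mul_le_mul hδ2 (by linarith) (by positivity) (by positivity)
  rw [div_mul_cancel₀ _ (ne_of_gt habs)] at h6
  nlinarith

/-- Polynomial decay bound on singular values: `s_k(T) ≤ C (k+1)^{-r}`. -/
def SB (r : ℝ) (T : G →L[ℂ] G) : Prop :=
  ∃ C : ℝ, 0 ≤ C ∧ ∀ k : ℕ, singularValue T k ≤ C * ((k : ℝ) + 1) ^ (-r)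

lemma half_rpow (k : ℕ) {r : ℝ} (hr : 0 ≤ r) :
    (((k / 2 : ℕ) : ℝ) + 1) ^ (-r) ≤ 2 ^ r * (((k : ℝ) + 1) ^ (-r)) := by
  have hk : k ≤ 2 * (k / 2) + 1 := by omega
  have h1 : (k : ℝ) + 1 ≤ 2 * (((k / 2 : ℕ) : ℝ) + 1) := by
    have : (k : ℝ) ≤ 2 * ((k / 2 : ℕ) : ℝ) + 1 := by exact_mod_cast hk
    linarith
  have hjpos : (0 : ℝ) < ((k / 2 : ℕ) : ℝ) + 1 := by positivity
  have hkpos : (0 : ℝ) < (k : ℝ) + 1 := by positivity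
  have h2 : ((k : ℝ) + 1) ^ r ≤ (2 * (((k / 2 : ℕ) : ℝ) + 1)) ^ r :=
    Real.rpow_le_rpow hkpos.le h1 hr
  have h3 : (2 * (((k / 2 : ℕ) : ℝ) + 1)) ^ (-r) ≤ ((k : ℝ) + 1) ^ (-r) := by
    rw [Real.rpow_neg (by positivity), Real.rpow_neg hkpos.le]
    have hp1 : (0 : ℝ) < ((k : ℝ) + 1) ^ r := Real.rpow_pos_of_pos hkpos r
    exact inv_anti₀ hp1 h2
  have h4 : (2 * (((k / 2 : ℕ) : ℝ) + 1)) ^ (-r) =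
      2 ^ (-r) * ((((k / 2 : ℕ) : ℝ) + 1)) ^ (-r) :=
    Real.mul_rpow (by norm_num) hjpos.le
  rw [h4] at h3
  have h6 : (0 : ℝ) < 2 ^ r := Real.rpow_pos_of_pos two_pos r
  calc (((k / 2 : ℕ) : ℝ) + 1) ^ (-r)
      = 2 ^ r * (2 ^ (-r) * ((((k / 2 : ℕ) : ℝ) + 1)) ^ (-r)) := by
        rw [← mul_assoc, ← Real.rpow_add two_pos]
        simp
    _ ≤ 2 ^ r * (((k : ℝ) + 1) ^ (-r)) := mul_le_mul_of_nonneg_left h3 h6.le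

lemma SB.comp_left {r : ℝ} {T : G →L[ℂ] G} (h : SB r T) (A : G →L[ℂ] G) : SB r (A * T) := by
  obtain ⟨C, hC0, hC⟩ := h
  refine ⟨‖A‖ * C, by positivity, fun k => ?_⟩
  calc singularValue (A * T) k ≤ ‖A‖ * singularValue T k := sv_comp_left A T k
    _ ≤ ‖A‖ * (C * ((k : ℝ) + 1) ^ (-r)) := mul_le_mul_of_nonneg_left (hC k) (norm_nonneg A)
    _ = ‖A‖ * C * ((k : ℝ) + 1) ^ (-r) := by ring

lemma SB.comp_right {r : ℝ} {T : G →L[ℂ] G} (h : SB r T) (A : G →L[ℂ] G) : SB r (T * A) := by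
  obtain ⟨C, hC0, hC⟩ := h
  refine ⟨‖A‖ * C, by positivity, fun k => ?_⟩
  calc singularValue (T * A) k ≤ ‖A‖ * singularValue T k := sv_comp_right T A k
    _ ≤ ‖A‖ * (C * ((k : ℝ) + 1) ^ (-r)) := mul_le_mul_of_nonneg_left (hC k) (norm_nonneg A)
    _ = ‖A‖ * C * ((k : ℝ) + 1) ^ (-r) := by ring

lemma SB.add {r : ℝ} {T S : G →L[ℂ] G} (hr : 0 ≤ r) (h : SB r T) (h' : SB r S) :
    SB r (T + S) := by
  obtain ⟨C, hC0, hC⟩ := h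
  obtain ⟨C', hC0', hC'⟩ := h'
  refine ⟨(C + C') * 2 ^ r, by positivity, fun k => ?_⟩
  calc singularValue (T + S) k
      ≤ singularValue (T + S) (k / 2 + k / 2) := sv_antitone _ (by omega)
    _ ≤ singularValue T (k / 2) + singularValue S (k / 2) := sv_add T S _ _
    _ ≤ C * (((k / 2 : ℕ) : ℝ) + 1) ^ (-r) + C' * (((k / 2 : ℕ) : ℝ) + 1) ^ (-r) :=
        add_le_add (hC _) (hC' _)
    _ = (C + C') * (((k / 2 : ℕ) : ℝ) + 1) ^ (-r) := by ring
    _ ≤ (C + C') * (2 ^ r * (((k : ℝ) + 1) ^ (-r))) :=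
        mul_le_mul_of_nonneg_left (half_rpow k hr) (by positivity)
    _ = (C + C') * 2 ^ r * (((k : ℝ) + 1) ^ (-r)) := by ring

lemma SB.mul {r r' : ℝ} {T S : G →L[ℂ] G} (hr : 0 ≤ r) (hr' : 0 ≤ r')
    (h : SB r T) (h' : SB r' S) : SB (r + r') (T * S) := by
  obtain ⟨C, hC0, hC⟩ := h
  obtain ⟨C', hC0', hC'⟩ := h'
  refine ⟨C * C' * 2 ^ (r + r'), by positivity, fun k => ?_⟩
  have hjpos : (0 : ℝ) < ((k / 2 : ℕ) : ℝ) + 1 := by positivity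
  calc singularValue (T * S) k
      ≤ singularValue (T * S) (k / 2 + k / 2) := sv_antitone _ (by omega)
    _ ≤ singularValue T (k / 2) * singularValue S (k / 2) := sv_mul T S _ _
    _ ≤ (C * (((k / 2 : ℕ) : ℝ) + 1) ^ (-r)) * (C' * (((k / 2 : ℕ) : ℝ) + 1) ^ (-r')) := by
        apply mul_le_mul (hC _) (hC' _) (sv_nonneg _ _)
        positivity
    _ = C * C' * ((((k / 2 : ℕ) : ℝ) + 1) ^ (-r) * (((k / 2 : ℕ) : ℝ) + 1) ^ (-r')) := by ring
    _ = C * C' * (((k / 2 : ℕ) : ℝ) + 1) ^ (-(r + r')) := by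
        rw [← Real.rpow_add hjpos, neg_add]
    _ ≤ C * C' * (2 ^ (r + r') * (((k : ℝ) + 1) ^ (-(r + r')))) := by
        apply mul_le_mul_of_nonneg_left (half_rpow k (by positivity)) (by positivity)
    _ = C * C' * 2 ^ (r + r') * (((k : ℝ) + 1) ^ (-(r + r'))) := by ring

lemma SB.mono {r r' : ℝ} {T : G →L[ℂ] G} (h : SB r T) (h0 : 0 ≤ r') (hle : r' ≤ r) :
    SB r' T := by
  obtain ⟨C, hC0, hC⟩ := h
  refine ⟨C, hC0, fun k => (hC k).trans (mul_le_mul_of_nonneg_left ?_ hC0)⟩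
  apply Real.rpow_le_rpow_of_exponent_le
  · have : (0 : ℝ) ≤ (k : ℝ) := Nat.cast_nonneg k
    linarith
  · linarith

/-- Weak Schatten class with exponent `m / c`, `c = n - 1`. -/
def Cl (c : ℝ) (m : ℕ) (T : G →L[ℂ] G) : Prop :=
  IsCompactOperator T ∧ SB ((m : ℝ) / c) T

lemma cl_of_mws {c : ℝ} {m : ℕ} {T : G →L[ℂ] G}
    (h : MemWeakSchatten (c / (m : ℝ)) T) : Cl c m T := by
  obtain ⟨h1, C, hC⟩ := h
  have hC0 : 0 ≤ C := by
    have h0 := hC 0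
    simp only [Nat.cast_zero, zero_add, Real.one_rpow, mul_one] at h0
    exact (sv_nonneg T 0).trans h0
  refine ⟨h1, C, hC0, fun k => ?_⟩
  have := hC k
  rwa [one_div_div] at this

lemma mws_of_cl {c : ℝ} {m : ℕ} {T : G →L[ℂ] G} (h : Cl c m T) :
    MemWeakSchatten (c / (m : ℝ)) T := by
  obtain ⟨h1, C, hC0, hC⟩ := h
  refine ⟨h1, C, fun k => ?_⟩
  rw [one_div_div]
  exact hC k

lemma Cl.comp_left {c : ℝ} {m : ℕ} {T : G →L[ℂ] G} (h : Cl c m T) (A : G →L[ℂ] G) :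
    Cl c m (A * T) := by
  refine ⟨?_, h.2.comp_left A⟩
  have := h.1.clm_comp A
  exact this

lemma Cl.comp_right {c : ℝ} {m : ℕ} {T : G →L[ℂ] G} (h : Cl c m T) (A : G →L[ℂ] G) :
    Cl c m (T * A) := by
  refine ⟨?_, h.2.comp_right A⟩
  have := h.1.comp_clm A
  exact this

lemma Cl.add {c : ℝ} {m : ℕ} {T S : G →L[ℂ] G} (hc : 0 < c) (h : Cl c m T) (h' : Cl c m S) :
    Cl c m (T + S) := by
  refine ⟨?_, h.2.add (by positivity) h'.2⟩
  have := h.1.add h'.1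
  exact this

lemma Cl.mul {c : ℝ} {m m' : ℕ} {T S : G →L[ℂ] G} (hc : 0 < c)
    (h : Cl c m T) (h' : Cl c m' S) : Cl c (m + m') (T * S) := by
  refine ⟨?_, ?_⟩
  · have := h'.1.clm_comp T
    exact this
  · have hs := h.2.mul (by positivity) (by positivity) h'.2
    rwa [show (m : ℝ) / c + (m' : ℝ) / c = ((m + m' : ℕ) : ℝ) / c by push_cast; ring] at hs

lemma Cl.mono {c : ℝ} {m m' : ℕ} {T : G →L[ℂ] G} (hc : 0 < c) (h : Cl c m T)
    (hle : m' ≤ m) : Cl c m' T := by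
  refine ⟨h.1, h.2.mono (by positivity) ?_⟩
  gcongr

section Calculus

variable {U : Set ℂ}

lemma iteratedDerivWithin_eq_iteratedDeriv' (hU : IsOpen U) {f : ℂ → G →L[ℂ] G} {z : ℂ}
    (hz : z ∈ U) (k : ℕ) : iteratedDerivWithin k f U z = iteratedDeriv k f z := by
  rw [iteratedDerivWithin_eq_iteratedFDerivWithin, iteratedDeriv_eq_iteratedFDeriv,
    iteratedFDerivWithin_of_isOpen k hU hz]

lemma iteratedDeriv_add_on (hU : IsOpen U) {f g : ℂ → G →L[ℂ] G}
    (hf : AnalyticOnNhd ℂ f U) (hg : AnalyticOnNhd ℂ g U) {z : ℂ} (hz : z ∈ U) (k : ℕ) :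
    iteratedDeriv k (fun w => f w + g w) z = iteratedDeriv k f z + iteratedDeriv k g z := by
  have hud : UniqueDiffOn ℂ U := hU.uniqueDiffOn
  rw [← iteratedDerivWithin_eq_iteratedDeriv' hU (f := fun w => f w + g w) hz k,
    ← iteratedDerivWithin_eq_iteratedDeriv' hU (f := f) hz k,
    ← iteratedDerivWithin_eq_iteratedDeriv' hU (f := g) hz k]
  exact iteratedDerivWithin_add hz hud ((hf.contDiffOn hud).contDiffWithinAt hz) ((hg.contDiffOn hud).contDiffWithinAt hz)

lemma iteratedDeriv_const_mul_on (hU : IsOpen U) {f : ℂ → G →L[ℂ] G}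
    (hf : AnalyticOnNhd ℂ f U) (B : G →L[ℂ] G) {z : ℂ} (hz : z ∈ U) (k : ℕ) :
    iteratedDeriv k (fun w => B * f w) z = B * iteratedDeriv k f z := by
  have hud : UniqueDiffOn ℂ U := hU.uniqueDiffOn
  rw [← iteratedDerivWithin_eq_iteratedDeriv' hU (f := fun w => B * f w) hz k,
    ← iteratedDerivWithin_eq_iteratedDeriv' hU (f := f) hz k]
  exact iteratedDerivWithin_const_smul hz hud B ((hf.contDiffOn hud).contDiffWithinAt hz)

/-- The key product rule: if all derivatives of `f` and `g` satisfy the shifted weak Schatten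
grading, then so do those of the product. -/
lemma key_prod (hU : IsOpen U) {c : ℝ} (hc : 0 < c) (k : ℕ) :
    ∀ (m m' : ℕ) (f g : ℂ → G →L[ℂ] G),
      AnalyticOnNhd ℂ f U → AnalyticOnNhd ℂ g U →
      (∀ j, j ≤ k → ∀ z ∈ U, 1 ≤ m + j → Cl c (2 * (m + j) + 1) (iteratedDeriv j f z)) →
      (∀ j, j ≤ k → ∀ z ∈ U, 1 ≤ m' + j → Cl c (2 * (m' + j) + 1) (iteratedDeriv j g z)) →
      ∀ z ∈ U, 1 ≤ m + m' + k →
        Cl c (2 * (m + m' + k) + 1) (iteratedDeriv k (fun w => f w * g w) z) := by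
  induction k with
  | zero =>
    intro m m' f g hfa hga hf hg z hz hmm
    rw [iteratedDeriv_zero]
    rcases Nat.eq_zero_or_pos m with hm | hm
    · subst hm
      have h := hg 0 le_rfl z hz (by omega)
      rw [iteratedDeriv_zero] at h
      have h2 := h.comp_left (f z)
      have hidx : 2 * (m' + 0) + 1 = 2 * (0 + m' + 0) + 1 := by omega
      rwa [hidx] at h2
    · rcases Nat.eq_zero_or_pos m' with hm' | hm'
      · subst hm'
        have h := hf 0 le_rfl z hz (by omega)
        rw [iteratedDeriv_zero] at h
        have h2 := h.comp_right (g z)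
        have hidx : 2 * (m + 0) + 1 = 2 * (m + 0 + 0) + 1 := by omega
        rwa [hidx] at h2
      · have h1 := hf 0 le_rfl z hz (by omega)
        rw [iteratedDeriv_zero] at h1
        have h2 := hg 0 le_rfl z hz (by omega)
        rw [iteratedDeriv_zero] at h2
        have h3 := Cl.mul hc h1 h2
        exact h3.mono hc (by omega)
  | succ k IH =>
    intro m m' f g hfa hga hf hg z hz hmm
    have e1 : iteratedDeriv (k + 1) (fun w => f w * g w) z
        = iteratedDeriv k (fun w => deriv f w * g w + f w * deriv g w) z := by
      rw [iteratedDeriv_succ']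
      apply Filter.EventuallyEq.iteratedDeriv_eq
      filter_upwards [hU.mem_nhds hz] with w hw
      exact deriv_mul ((hfa w hw).differentiableAt) ((hga w hw).differentiableAt)
    have e2 : iteratedDeriv k (fun w => deriv f w * g w + f w * deriv g w) z
        = iteratedDeriv k (fun w => deriv f w * g w) z
          + iteratedDeriv k (fun w => f w * deriv g w) z :=
      iteratedDeriv_add_on hU (hfa.deriv.mul hga) (hfa.mul hga.deriv) hz k
    rw [e1, e2]
    have hfd : ∀ j, j ≤ k → ∀ z' ∈ U, 1 ≤ (m + 1) + j →
        Cl c (2 * ((m + 1) + j) + 1) (iteratedDeriv j (deriv f) z') := by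
      intro j hj z' hz' _
      have h := hf (j + 1) (by omega) z' hz' (by omega)
      rw [iteratedDeriv_succ'] at h
      have hidx : 2 * (m + (j + 1)) + 1 = 2 * ((m + 1) + j) + 1 := by omega
      rwa [hidx] at h
    have hgd : ∀ j, j ≤ k → ∀ z' ∈ U, 1 ≤ (m' + 1) + j →
        Cl c (2 * ((m' + 1) + j) + 1) (iteratedDeriv j (deriv g) z') := by
      intro j hj z' hz' _
      have h := hg (j + 1) (by omega) z' hz' (by omega)
      rw [iteratedDeriv_succ'] at h
      have hidx : 2 * (m' + (j + 1)) + 1 = 2 * ((m' + 1) + j) + 1 := by omega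
      rwa [hidx] at h
    have hf' : ∀ j, j ≤ k → ∀ z' ∈ U, 1 ≤ m + j →
        Cl c (2 * (m + j) + 1) (iteratedDeriv j f z') := fun j hj => hf j (by omega)
    have hg' : ∀ j, j ≤ k → ∀ z' ∈ U, 1 ≤ m' + j →
        Cl c (2 * (m' + j) + 1) (iteratedDeriv j g z') := fun j hj => hg j (by omega)
    have hd1 := IH (m + 1) m' (deriv f) g hfa.deriv hga hfd hg' z hz (by omega)
    have hd2 := IH m (m' + 1) f (deriv g) hfa hga.deriv hf' hgd z hz (by omega)
    have hidx1 : 2 * ((m + 1) + m' + k) + 1 = 2 * (m + m' + (k + 1)) + 1 := by omega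
    have hidx2 : 2 * (m + (m' + 1) + k) + 1 = 2 * (m + m' + (k + 1)) + 1 := by omega
    rw [hidx1] at hd1
    rw [hidx2] at hd2
    exact Cl.add hc hd1 hd2

end Calculus

end WeakSchattenAux

open WeakSchattenAux in
/-- Let `T(λ) = (I − B M(λ))⁻¹` where `M` is holomorphic with
`M^{(k)}(λ) ∈ S_{(n−1)/(2k+1),∞}` for `k ≥ 1`.  Then `T'(λ) = T(λ) B M'(λ) T(λ)` and
`T^{(k)}(λ) ∈ S_{(n−1)/(2k+1),∞}` for all `k ≥ 1`. -/
theorem iteratedDeriv_inverse_weakSchatten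
    {G : Type*} [NormedAddCommGroup G] [InnerProductSpace ℂ G] [CompleteSpace G]
    (n : ℕ) (hn : 2 ≤ n) {U : Set ℂ} (hU : IsOpen U)
    (B : G →L[ℂ] G) (M : ℂ → (G →L[ℂ] G))
    (hM : DifferentiableOn ℂ M U)
    (hMk : ∀ k : ℕ, 1 ≤ k → ∀ z ∈ U,
      MemWeakSchatten (((n : ℝ) - 1) / (2 * (k : ℝ) + 1)) (iteratedDeriv k M z))
    (hinv : ∀ z ∈ U, IsUnit (1 - B ∘L M z)) :
    ∀ lam ∈ U,
      deriv (fun z => Ring.inverse (1 - B ∘L M z)) lam =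
        (Ring.inverse (1 - B ∘L M lam)) ∘L
          (B ∘L ((deriv M lam) ∘L (Ring.inverse (1 - B ∘L M lam)))) ∧
      ∀ k : ℕ, 1 ≤ k →
        MemWeakSchatten (((n : ℝ) - 1) / (2 * (k : ℝ) + 1))
          (iteratedDeriv k (fun z => Ring.inverse (1 - B ∘L M z)) lam) := by
  intro lam hlam
  set c : ℝ := (n : ℝ) - 1 with hcdef
  have hn2 : (2 : ℝ) ≤ (n : ℝ) := by exact_mod_cast hn
  have hc : 0 < c := by rw [hcdef]; linarith
  set T : ℂ → G →L[ℂ] G := fun z => Ring.inverse (1 - B ∘L M z) with hT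
  have hMa : AnalyticOnNhd ℂ M U := hM.analyticOnNhd hU
  have hga : AnalyticOnNhd ℂ (fun z => 1 - B ∘L M z) U := by
    have h1 : AnalyticOnNhd ℂ (fun _ : ℂ => (1 : G →L[ℂ] G)) U := analyticOnNhd_const
    have h2 : AnalyticOnNhd ℂ (fun z => B * M z) U := analyticOnNhd_const.mul hMa
    exact h1.sub h2
  have hTd : DifferentiableOn ℂ T U := fun z hz =>
    (((hga z hz).differentiableAt).inverse (hinv z hz)).differentiableWithinAt
  have hTa : AnalyticOnNhd ℂ T U := hTd.analyticOnNhd hU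
  have hTg : ∀ z ∈ U, T z * (1 - B ∘L M z) = 1 := fun z hz =>
    Ring.inverse_mul_cancel _ (hinv z hz)
  have hgT : ∀ z ∈ U, (1 - B ∘L M z) * T z = 1 := fun z hz =>
    Ring.mul_inverse_cancel _ (hinv z hz)
  -- The derivative formula, valid at every point of `U`.
  have hder : ∀ w ∈ U, deriv T w = T w * (B * deriv M w * T w) := by
    intro w hw
    have hgd : DifferentiableAt ℂ (fun z => 1 - B ∘L M z) w := (hga w hw).differentiableAt
    have hTdw : DifferentiableAt ℂ T w := (hTa w hw).differentiableAt
    have h0 : deriv (fun z => (1 - B ∘L M z) * T z) w = 0 := by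
      have he : (fun z => (1 - B ∘L M z) * T z) =ᶠ[nhds w] fun _ => (1 : G →L[ℂ] G) := by
        filter_upwards [hU.mem_nhds hw] with u hu
        exact hgT u hu
      rw [he.deriv_eq, deriv_const]
    have h1 : deriv (fun z => (1 - B ∘L M z) * T z) w
        = deriv (fun z => 1 - B ∘L M z) w * T w + (1 - B ∘L M w) * deriv T w :=
      deriv_mul hgd hTdw
    have h2 : deriv (fun z => 1 - B ∘L M z) w = -(B * deriv M w) := by
      have ha : deriv (fun z => 1 - B ∘L M z) w = -deriv (fun z => B ∘L M z) w :=
        deriv_const_sub 1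
      have hb : deriv (fun z => B ∘L M z) w = B * deriv M w :=
        deriv_const_mul B ((hMa w hw).differentiableAt)
      rw [ha, hb]
    have h4 : -(B * deriv M w) * T w + (1 - B ∘L M w) * deriv T w = 0 := by
      rw [← h2, ← h1, h0]
    rw [neg_mul] at h4
    have h5 : (B * deriv M w) * T w = (1 - B ∘L M w) * deriv T w := neg_add_eq_zero.mp h4
    calc deriv T w = 1 * deriv T w := (one_mul _).symm
      _ = (T w * (1 - B ∘L M w)) * deriv T w := by rw [hTg w hw]
      _ = T w * ((1 - B ∘L M w) * deriv T w) := by rw [mul_assoc]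
      _ = T w * (B * deriv M w * T w) := by rw [← h5]
  constructor
  · calc deriv T lam = T lam * (B * deriv M lam * T lam) := hder lam hlam
      _ = T lam * (B * (deriv M lam * T lam)) := by rw [mul_assoc]
      _ = (Ring.inverse (1 - B ∘L M lam)) ∘L
          (B ∘L ((deriv M lam) ∘L (Ring.inverse (1 - B ∘L M lam)))) := rfl
  · intro k hk
    -- grading of the derivatives of `M`
    have hMk' : ∀ i : ℕ, 1 ≤ i → ∀ z ∈ U, Cl c (2 * i + 1) (iteratedDeriv i M z) := by
      intro i hi z hz
      have h := hMk i hi z hz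
      have hcast : c / (2 * (i : ℝ) + 1) = c / ((2 * i + 1 : ℕ) : ℝ) := by push_cast; ring
      rw [hcast] at h
      exact cl_of_mws h
    -- grading of the derivatives of `T`, by strong induction
    have main : ∀ K : ℕ, 1 ≤ K → ∀ z ∈ U, Cl c (2 * K + 1) (iteratedDeriv K T z) := by
      intro K
      induction K using Nat.strong_induction_on with
      | _ K IH =>
        intro hK z hz
        obtain ⟨K', rfl⟩ : ∃ K', K = K' + 1 := ⟨K - 1, by omega⟩
        have e1 : iteratedDeriv (K' + 1) T z
            = iteratedDeriv K' (fun w => T w * ((B * deriv M w) * T w)) z := by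
          rw [iteratedDeriv_succ']
          apply Filter.EventuallyEq.iteratedDeriv_eq
          filter_upwards [hU.mem_nhds hz] with w hw
          exact hder w hw
        rw [e1]
        have hBMa : AnalyticOnNhd ℂ (fun w => B * deriv M w) U :=
          analyticOnNhd_const.mul hMa.deriv
        have hinner_a : AnalyticOnNhd ℂ (fun w => (B * deriv M w) * T w) U := hBMa.mul hTa
        -- grading of `T` at orders `≤ K'`
        have hTgrad : ∀ j, j ≤ K' → ∀ z' ∈ U, 1 ≤ 0 + j →
            Cl c (2 * (0 + j) + 1) (iteratedDeriv j T z') := by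
          intro j hj z' hz' h1j
          have h := IH j (by omega) (by omega) z' hz'
          have hidx : 2 * j + 1 = 2 * (0 + j) + 1 := by omega
          rwa [hidx] at h
        -- grading of `B * M'` (with shift `m = 1`)
        have hBMgrad : ∀ j, ∀ z'' ∈ U,
            Cl c (2 * (1 + j) + 1) (iteratedDeriv j (fun w => B * deriv M w) z'') := by
          intro i z'' hz''
          have e : iteratedDeriv i (fun w => B * deriv M w) z''
              = B * iteratedDeriv (i + 1) M z'' := by
            rw [iteratedDeriv_const_mul_on hU hMa.deriv B hz'' i, ← iteratedDeriv_succ']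
          rw [e]
          have h := (hMk' (i + 1) (by omega) z'' hz'').comp_left B
          have hidx : 2 * (i + 1) + 1 = 2 * (1 + i) + 1 := by omega
          rwa [hidx] at h
        -- grading of the inner product `(B M') T` (with shift `m = 1`)
        have hIgrad : ∀ j, j ≤ K' → ∀ z' ∈ U, 1 ≤ 1 + j →
            Cl c (2 * (1 + j) + 1) (iteratedDeriv j (fun w => (B * deriv M w) * T w) z') := by
          intro j hj z' hz' _
          have h := key_prod hU hc j 1 0 (fun w => B * deriv M w) T hBMa hTa
            (fun i _ z'' hz'' _ => hBMgrad i z'' hz'')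
            (fun i hi z'' hz'' h1 => hTgrad i (by omega) z'' hz'' h1)
            z' hz' (by omega)
          have hidx : 2 * (1 + 0 + j) + 1 = 2 * (1 + j) + 1 := by omega
          rwa [hidx] at h
        have h := key_prod hU hc K' 0 1 T (fun w => (B * deriv M w) * T w) hTa hinner_a
          hTgrad hIgrad z hz (by omega)
        have hidx : 2 * (0 + 1 + K') + 1 = 2 * (K' + 1) + 1 := by omega
        rwa [hidx] at h
    have hfin := main k hk lam hlam
    have hcast : c / (2 * (k : ℝ) + 1) = c / ((2 * k + 1 : ℕ) : ℝ) := by push_cast; ring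
    rw [hcast]
    exact mws_of_cl hfin
end
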